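/- arXiv:1209.0954 — 9 statements merged into one kernel-verified Lean document; each statement's English description precedes it below -/
import Mathlib

section
/- Let G act on a set Ψ with |Ψ| > N. If for every (N+1)-tuple of pairwise distinct points T and every permutation σ of {1,…,N+1}, the tuples T and σ(T) lie in the same G-orbit, then G acts N-transitively on Ψ. -/
section Aux
variable {G : Type*} [Group G] {Ψ : Type*} [MulAction G Ψ] {N : ℕ}

private lemma exists_notin (hcard : (N : Cardinal) < Cardinal.mk Ψ) (a : Fin N ↪ Ψ) :
    ∃ y : Ψ, ∀ i, a i ≠ y := by
  by_contra h
  push_neg at h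
  have hsurj : Function.Surjective (fun i : ULift.{_,0} (Fin N) => a i.down) := fun y => by
    obtain ⟨i, hi⟩ := h y; exact ⟨⟨i⟩, hi⟩
  have := Cardinal.mk_le_of_surjective hsurj
  simp only [Cardinal.mk_uLift, Cardinal.mk_fin, Cardinal.lift_natCast] at this
  exact absurd this hcard.not_ge

private def extEmb (a : Fin N ↪ Ψ) (y : Ψ) (hy : ∀ i, a i ≠ y) : Fin (N + 1) ↪ Ψ :=
  ⟨Fin.snoc a y, by
    intro i j h
    induction i using Fin.lastCases with
    | last =>
      induction j using Fin.lastCases with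
      | last => rfl
      | cast j =>
        simp only [Fin.snoc_last, Fin.snoc_castSucc] at h
        exact absurd h.symm (hy j)
    | cast i =>
      induction j using Fin.lastCases with
      | last =>
        simp only [Fin.snoc_last, Fin.snoc_castSucc] at h
        exact absurd h (hy i)
      | cast j =>
        simp only [Fin.snoc_castSucc] at h
        exact congrArg Fin.castSucc (a.injective h)⟩

@[simp] private lemma extEmb_castSucc (a : Fin N ↪ Ψ) (y : Ψ) (hy : ∀ i, a i ≠ y) (i : Fin N) :
    extEmb a y hy i.castSucc = a i := Fin.snoc_castSucc (α := fun _ => Ψ) (p := a) (x := y) i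

@[simp] private lemma extEmb_last (a : Fin N ↪ Ψ) (y : Ψ) (hy : ∀ i, a i ≠ y) :
    extEmb a y hy (Fin.last N) = y := Fin.snoc_last (α := fun _ => Ψ) (p := a) (x := y)

variable (hperm : ∀ (T : Fin (N + 1) ↪ Ψ) (σ : Equiv.Perm (Fin (N + 1))),
      ∃ g : G, ∀ i, g • T i = T (σ i))

include hperm

private lemma replace_one (a : Fin N ↪ Ψ) (y : Ψ) (hy : ∀ i, a i ≠ y) (i₀ : Fin N) :
    ∃ x : G, (∀ i, i ≠ i₀ → x • a i = a i) ∧ x • a i₀ = y := by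
  obtain ⟨x, hx⟩ := hperm (extEmb a y hy) (Equiv.swap i₀.castSucc (Fin.last N))
  refine ⟨x, fun i hi => ?_, ?_⟩
  · have h := hx i.castSucc
    rw [Equiv.swap_apply_of_ne_of_ne (by simpa using hi) (Fin.castSucc_lt_last i).ne] at h
    simpa using h
  · have h := hx i₀.castSucc
    rw [Equiv.swap_apply_left] at h
    simpa using h

private lemma permute (hcard : (N : Cardinal) < Cardinal.mk Ψ) (a : Fin N ↪ Ψ)
    (σ : Equiv.Perm (Fin N)) : ∃ x : G, ∀ i, x • a i = a (σ i) := by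
  classical
  obtain ⟨y, hy⟩ := exists_notin hcard a
  obtain ⟨x, hx⟩ := hperm (extEmb a y hy)
    (σ.viaFintypeEmbedding ⟨Fin.castSucc, Fin.castSucc_injective N⟩)
  refine ⟨x, fun i => ?_⟩
  have h := hx i.castSucc
  have : (σ.viaFintypeEmbedding ⟨Fin.castSucc, Fin.castSucc_injective N⟩) i.castSucc
      = (σ i).castSucc := Equiv.Perm.viaFintypeEmbedding_apply_image σ _ i
  rw [this] at h
  simpa using h

end Aux

/-- If `|Ψ| > N` and for every injective `(N+1)`-tuple `T` in `Ψ` and every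
permutation `σ` of the indices, `T` and `σ(T)` lie in the same `G`-orbit, then
`G` acts `N`-transitively on `Ψ`. -/
theorem n_transitive_of_permuting_configurations
    {G : Type*} [Group G] {Ψ : Type*} [MulAction G Ψ] (N : ℕ)
    (hcard : (N : Cardinal) < Cardinal.mk Ψ)
    (hperm : ∀ (T : Fin (N + 1) ↪ Ψ) (σ : Equiv.Perm (Fin (N + 1))),
      ∃ g : G, ∀ i, g • T i = T (σ i)) :
    ∀ f g : Fin N ↪ Ψ, ∃ x : G, ∀ i, x • f i = g i := by
  classical
  -- main induction on |range f \ range g|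
  suffices H : ∀ (n : ℕ) (a b : Fin N ↪ Ψ),
      ((Finset.univ.image a) \ (Finset.univ.image b)).card = n →
      ∃ x : G, ∀ i, x • a i = b i by
    intro f g
    exact H _ f g rfl
  intro n
  induction n with
  | zero =>
    intro a b hn
    -- images are equal
    have hsub : (Finset.univ.image a) ⊆ (Finset.univ.image b) := by
      rw [← Finset.sdiff_eq_empty_iff_subset]
      exact Finset.card_eq_zero.mp hn
    -- define a permutation τ with a (τ i) = b i
    have hb : ∀ i : Fin N, ∃ j, a j = b i := by
      intro i
      have hcards : (Finset.univ.image a).card = (Finset.univ.image b).card := by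
        rw [Finset.card_image_of_injective _ a.injective,
          Finset.card_image_of_injective _ b.injective]
      have heq : (Finset.univ.image a) = (Finset.univ.image b) :=
        Finset.eq_of_subset_of_card_le hsub hcards.ge
      have : b i ∈ Finset.univ.image a := heq ▸ Finset.mem_image_of_mem b (Finset.mem_univ i)
      obtain ⟨j, _, hj⟩ := Finset.mem_image.mp this
      exact ⟨j, hj⟩
    choose τ hτ using hb
    have hτinj : Function.Injective τ := fun i j h => by
      apply b.injective
      rw [← hτ i, ← hτ j, h]
    obtain ⟨x, hx⟩ := permute hperm hcard a (Equiv.ofBijective τ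
      (Finite.injective_iff_bijective.mp hτinj))
    exact ⟨x, fun i => by rw [hx i, Equiv.ofBijective_apply, hτ i]⟩
  | succ n ih =>
    intro a b hn
    set A := Finset.univ.image a with hA
    set B := Finset.univ.image b with hB
    have hAB : (A \ B).Nonempty := by
      rw [← Finset.card_pos, hn]; exact Nat.succ_pos n
    obtain ⟨x0, hx0⟩ := hAB
    have hx0A := (Finset.mem_sdiff.mp hx0).1
    have hx0B := (Finset.mem_sdiff.mp hx0).2
    -- B \ A is nonempty
    have hBA : (B \ A).Nonempty := by
      by_contra h
      rw [Finset.not_nonempty_iff_eq_empty, Finset.sdiff_eq_empty_iff_subset] at h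
      have hcards : A.card = B.card := by
        rw [hA, hB, Finset.card_image_of_injective _ a.injective,
          Finset.card_image_of_injective _ b.injective]
      have : B = A := Finset.eq_of_subset_of_card_le h hcards.le
      rw [this] at hx0B
      exact hx0B hx0A
    obtain ⟨y, hy⟩ := hBA
    have hyB := (Finset.mem_sdiff.mp hy).1
    have hyA := (Finset.mem_sdiff.mp hy).2
    obtain ⟨i₀, _, hi₀⟩ := Finset.mem_image.mp hx0A
    have hyrange : ∀ i, a i ≠ y := fun i h =>
      hyA (h ▸ Finset.mem_image_of_mem a (Finset.mem_univ i))
    obtain ⟨x1, hx1, hx1'⟩ := replace_one hperm a y hyrange i₀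
    set a' : Fin N ↪ Ψ := ⟨fun i => if i = i₀ then y else a i, by
      intro i j h
      dsimp only at h
      by_cases hi : i = i₀ <;> by_cases hj : j = i₀
      · rw [hi, hj]
      · rw [if_pos hi, if_neg hj] at h; exact absurd h.symm (hyrange j)
      · rw [if_neg hi, if_pos hj] at h; exact absurd h (hyrange i)
      · rw [if_neg hi, if_neg hj] at h; exact a.injective h⟩ with ha'
    have ha'app : ∀ i, a' i = if i = i₀ then y else a i := fun i => rfl
    have hrel1 : ∀ i, x1 • a i = a' i := by
      intro i
      by_cases hi : i = i₀
      · rw [ha'app, if_pos hi, hi, hx1']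
      · rw [ha'app, if_neg hi, hx1 i hi]
    have himg : Finset.univ.image a' = insert y (A.erase x0) := by
      ext z
      simp only [Finset.mem_image, Finset.mem_univ, true_and, Finset.mem_insert,
        Finset.mem_erase, hA]
      constructor
      · rintro ⟨i, rfl⟩
        by_cases hi : i = i₀
        · left; rw [ha'app, if_pos hi]
        · right
          rw [ha'app, if_neg hi]
          exact ⟨fun h => hi (a.injective (h.trans hi₀.symm)), i, rfl⟩
      · rintro (rfl | ⟨hz, i, rfl⟩)
        · exact ⟨i₀, by rw [ha'app, if_pos rfl]⟩
        · have hi : i ≠ i₀ := fun h => hz (h ▸ hi₀ ▸ rfl)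
          exact ⟨i, by rw [ha'app, if_neg hi]⟩
    have hcardA' : (Finset.univ.image a' \ B).card = n := by
      rw [himg, Finset.insert_sdiff_of_mem _ hyB]
      have : A.erase x0 \ B = (A \ B).erase x0 := by
        ext z
        simp only [Finset.mem_sdiff, Finset.mem_erase]
        tauto
      rw [this, Finset.card_erase_of_mem hx0, hn]; rfl
    obtain ⟨x2, hx2⟩ := ih a' b hcardA'
    refine ⟨x2 * x1, fun i => ?_⟩
    rw [mul_smul, hrel1 i, hx2 i]
end

section
/- Let G act on a set Ψ and suppose G is 2-transitive and contains a transposition (a permutation interchanging two points and fixing all others). Then the image of G in Sym(Ψ) is dense, i.e., G is highly transitive on Ψ. -/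
/-- The topology of pointwise convergence on the symmetric group of a set `Ψ`. -/
def permPointwiseTopology (Ψ : Type*) : TopologicalSpace (Equiv.Perm Ψ) :=
  letI : TopologicalSpace Ψ := ⊥
  TopologicalSpace.induced
    (fun σ : Equiv.Perm Ψ => ((σ : Ψ → Ψ), (σ.symm : Ψ → Ψ))) inferInstance

/-- If a subgroup `G ≤ Sym Ψ` is 2-transitive and contains a transposition, then
`G` is dense in `Sym Ψ`, i.e. highly transitive on `Ψ`. -/
theorem dense_of_two_transitive_with_transposition (Ψ : Type*) [DecidableEq Ψ]
    (G : Subgroup (Equiv.Perm Ψ))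
    (htransp : ∃ p q : Ψ, p ≠ q ∧ Equiv.swap p q ∈ G)
    (h2 : ∀ p q p' q' : Ψ, p ≠ q → p' ≠ q' →
      ∃ g ∈ G, g p = p' ∧ g q = q') :
    @Dense (Equiv.Perm Ψ) (permPointwiseTopology Ψ) (G : Set (Equiv.Perm Ψ)) ∧
      (∀ (N : ℕ) (f g : Fin N ↪ Ψ), ∃ σ ∈ G, ∀ i, σ (f i) = g i) := by
  classical
  obtain ⟨p₀, q₀, hpq₀, hsw₀⟩ := htransp
  -- G contains all transpositions
  have hswap : ∀ p q : Ψ, p ≠ q → Equiv.swap p q ∈ G := by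
    intro p q hpq
    obtain ⟨g, hg, hgp, hgq⟩ := h2 p₀ q₀ p q hpq₀ hpq
    have hconj : Equiv.swap p q = g * Equiv.swap p₀ q₀ * g⁻¹ := by
      rw [← hgp, ← hgq]
      ext x
      simp only [Equiv.Perm.mul_apply]
      rw [Equiv.swap_apply_def, Equiv.swap_apply_def]
      by_cases h1 : g⁻¹ x = p₀
      · have : x = g p₀ := by rw [← h1]; simp
        simp [this, hpq₀]
      · by_cases h2' : g⁻¹ x = q₀
        · have : x = g q₀ := by rw [← h2']; simp
          have hne : g q₀ ≠ g p₀ := fun h => hpq₀ (g.injective h).symm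
          simp [this, hne, hpq₀.symm]
        · have hx1 : x ≠ g p₀ := fun h => h1 (by rw [h]; simp)
          have hx2 : x ≠ g q₀ := fun h => h2' (by rw [h]; simp)
          simp [hx1, hx2, show ¬ g.symm x = p₀ from h1, show ¬ g.symm x = q₀ from h2']
    rw [hconj]
    exact mul_mem (mul_mem hg hsw₀) (inv_mem hg)
  -- N-transitivity
  have key : ∀ (N : ℕ) (f g : Fin N ↪ Ψ), ∃ σ ∈ G, ∀ i, σ (f i) = g i := by
    intro N
    induction N with
    | zero => exact fun f g => ⟨1, one_mem G, fun i => i.elim0⟩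
    | succ N ih =>
      intro f g
      obtain ⟨σ, hσ, hσf⟩ := ih ((Fin.succEmb N).trans f) ((Fin.succEmb N).trans g)
      simp only [Function.Embedding.trans_apply] at hσf
      by_cases hab : σ (f 0) = g 0
      · exact ⟨σ, hσ, fun i => Fin.cases hab (fun j => hσf j) i⟩
      · refine ⟨Equiv.swap (σ (f 0)) (g 0) * σ, mul_mem (hswap _ _ hab) hσ, fun i => ?_⟩
        refine Fin.cases ?_ (fun j => ?_) i
        · simp [Equiv.Perm.mul_apply]
        · have h1 : σ (f j.succ) = g j.succ := hσf j
          have h2a : g j.succ ≠ σ (f 0) := by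
            rw [← h1]
            intro h
            exact Fin.succ_ne_zero j (f.injective (σ.injective h))
          have h2b : g j.succ ≠ g 0 := fun h => Fin.succ_ne_zero j (g.injective h)
          simp [Equiv.Perm.mul_apply, h1, Equiv.swap_apply_of_ne_of_ne h2a h2b]
  refine ⟨?_, key⟩
  -- density
  letI : TopologicalSpace Ψ := ⊥
  have htop : permPointwiseTopology Ψ = TopologicalSpace.induced
      (fun σ : Equiv.Perm Ψ => ((σ : Ψ → Ψ), (σ.symm : Ψ → Ψ))) inferInstance := rfl
  rw [htop]
  letI : TopologicalSpace (Equiv.Perm Ψ) := TopologicalSpace.induced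
      (fun σ : Equiv.Perm Ψ => ((σ : Ψ → Ψ), (σ.symm : Ψ → Ψ))) inferInstance
  rw [dense_iff_inter_open]
  rintro U hU ⟨σ, hσU⟩
  obtain ⟨V, hV, rfl⟩ := isOpen_induced_iff.mp hU
  obtain ⟨U₁, U₂, hU₁, hU₂, hσ₁, hσ₂, hVsub⟩ := isOpen_prod_iff.mp hV _ _ hσU
  obtain ⟨I, u, hu, hIsub⟩ := isOpen_pi_iff.mp hU₁ _ hσ₁
  obtain ⟨J, v, hv, hJsub⟩ := isOpen_pi_iff.mp hU₂ _ hσ₂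
  set S : Finset Ψ := I ∪ J.image σ.symm with hS
  set femb : Fin S.card ↪ Ψ :=
    ⟨fun i => (S.equivFin.symm i : Ψ), fun i j h => by
      have := Subtype.ext h
      simpa using S.equivFin.symm.injective this⟩ with hfemb
  obtain ⟨τ, hτG, hτ⟩ := key S.card femb (femb.trans σ.toEmbedding)
  simp only [Function.Embedding.trans_apply, Equiv.coe_toEmbedding] at hτ
  have hagree : ∀ x ∈ S, τ x = σ x := by
    intro x hx
    have := hτ (S.equivFin ⟨x, hx⟩)
    have e : femb (S.equivFin ⟨x, hx⟩) = x := congrArg Subtype.val (S.equivFin.symm_apply_apply ⟨x, hx⟩)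
    rwa [e] at this
  refine ⟨τ, ?_, hτG⟩
  apply hVsub
  constructor
  · apply hIsub
    intro i hi
    show τ i ∈ u i
    have : τ i = σ i := hagree i (Finset.mem_union_left _ hi)
    rw [this]
    exact (hu i hi).2
  · apply hJsub
    intro j hj
    show τ.symm j ∈ v j
    have hmem : σ.symm j ∈ S := Finset.mem_union_right _ (Finset.mem_image_of_mem _ hj)
    have h1 : τ (σ.symm j) = j := by rw [hagree _ hmem]; simp
    have h2 : τ.symm j = σ.symm j := by
      apply τ.injective; rw [h1]; simp
    rw [h2]
    exact (hv j hj).2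
end

section
/- The subgroup of Sym(ℤ) generated by the transposition (0 1) and the shift n ↦ n+2 is transitive on ℤ but not 2-transitive; in fact the orbit of the pair (0,1) is {(a, a+(−1)^a) : a ∈ ℤ}. -/
namespace ShiftSwapAux

/-- The sign `(-1)^a` as an integer. -/
def e (a : ℤ) : ℤ := (((-1 : ℤˣ) ^ a : ℤˣ) : ℤ)

lemma e_even {a : ℤ} (h : Even a) : e a = 1 := by
  unfold e
  rw [Even.neg_one_zpow h]
  rfl

lemma e_odd {a : ℤ} (h : Odd a) : e a = -1 := by
  obtain ⟨k, rfl⟩ := h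
  unfold e
  rw [zpow_add, zpow_one, Even.neg_one_zpow ⟨k, two_mul k⟩, one_mul]
  rfl

lemma e_cases (a : ℤ) : (Even a ∧ e a = 1) ∨ (Odd a ∧ e a = -1) := by
  rcases Int.even_or_odd a with h | h
  · exact Or.inl ⟨h, e_even h⟩
  · exact Or.inr ⟨h, e_odd h⟩

lemma f_invol : Function.Involutive (fun a : ℤ => a + e a) := by
  intro a
  show (a + e a) + e (a + e a) = a
  rcases e_cases a with ⟨h, he⟩ | ⟨h, he⟩
  · rw [he, e_odd h.add_one]
    ring
  · rw [he, e_even (by obtain ⟨k, rfl⟩ := h; exact ⟨k, by ring⟩)]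
    ring

/-- The involution `a ↦ a + (-1)^a` as a permutation. -/
def P : Equiv.Perm ℤ := Function.Involutive.toPerm _ f_invol

@[simp] lemma P_apply (a : ℤ) : P a = a + e a := rfl

lemma swap_comm_P : Commute (Equiv.swap (0 : ℤ) 1) P := by
  apply Equiv.ext
  intro n
  simp only [Equiv.Perm.mul_apply]
  by_cases h0 : n = 0
  · subst h0; simp [e_even (Even.zero), e_odd odd_one, Equiv.swap_apply_left,
      Equiv.swap_apply_right]
  by_cases h1 : n = 1
  · subst h1
    have : (1 : ℤ) + -1 = 0 := by ring
    simp [e_odd odd_one, e_even (Even.zero), this, Equiv.swap_apply_left,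
      Equiv.swap_apply_right]
  · rw [Equiv.swap_apply_of_ne_of_ne h0 h1]
    have hP0 : P n ≠ 0 := by
      rcases e_cases n with ⟨h, he⟩ | ⟨h, he⟩
      · simp only [P_apply, he]
        intro hc
        have : n = -1 := by linarith
        subst this; exact (Int.not_odd_iff_even.mpr h) ⟨-1, by ring⟩
      · simp only [P_apply, he]
        intro hc
        have : n = 1 := by linarith
        exact h1 this
    have hP1 : P n ≠ 1 := by
      rcases e_cases n with ⟨h, he⟩ | ⟨h, he⟩
      · simp only [P_apply, he]
        intro hc
        have : n = 0 := by linarith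
        exact h0 this
      · simp only [P_apply, he]
        intro hc
        have : n = 2 := by linarith
        subst this; exact (Int.not_odd_iff_even.mpr (by decide)) h
    rw [Equiv.swap_apply_of_ne_of_ne hP0 hP1]

lemma addRight_comm_P : Commute (Equiv.addRight (2 : ℤ)) P := by
  apply Equiv.ext
  intro n
  simp only [Equiv.Perm.mul_apply, Equiv.coe_addRight, P_apply]
  have : e (n + 2) = e n := by
    rcases e_cases n with ⟨h, he⟩ | ⟨h, he⟩
    · rw [he, e_even (by obtain ⟨k, rfl⟩ := h; exact ⟨k + 1, by ring⟩)]
    · rw [he, e_odd (by obtain ⟨k, rfl⟩ := h; exact ⟨k + 1, by ring⟩)]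
  rw [this]; ring

lemma addRight_add (a b : ℤ) :
    Equiv.addRight (a + b) = Equiv.addRight b * Equiv.addRight a := by
  apply Equiv.ext
  intro n
  simp [Equiv.Perm.mul_apply, add_assoc]

end ShiftSwapAux

open ShiftSwapAux in
/-- The subgroup of `Sym ℤ` generated by the transposition `(0 1)` and the shift
`n ↦ n + 2` is transitive on `ℤ`, the orbit of the pair `(0,1)` is
`{(a, a + (−1)^a) | a ∈ ℤ}`, and the subgroup is not 2-transitive. -/
theorem shift_and_transposition_not_two_transitive :
    ∀ G : Subgroup (Equiv.Perm ℤ),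
      G = Subgroup.closure {Equiv.swap (0 : ℤ) 1, Equiv.addRight (2 : ℤ)} →
      (∀ a b : ℤ, ∃ g ∈ G, g a = b) ∧
      ({p : ℤ × ℤ | ∃ g ∈ G, (g 0, g 1) = p} =
        {p : ℤ × ℤ | ∃ a : ℤ, p = (a, a + (((-1 : ℤˣ) ^ a : ℤˣ) : ℤ))}) ∧
      ¬ (∀ p q p' q' : ℤ, p ≠ q → p' ≠ q' → ∃ g ∈ G, g p = p' ∧ g q = q') := by
  intro G hG
  -- basic membership facts
  have hs : Equiv.swap (0 : ℤ) 1 ∈ G := by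
    rw [hG]; exact Subgroup.subset_closure (Set.mem_insert _ _)
  have ht : Equiv.addRight (2 : ℤ) ∈ G := by
    rw [hG]; exact Subgroup.subset_closure (Set.mem_insert_of_mem _ rfl)
  -- all even shifts are in G
  have hshift : ∀ k : ℤ, Equiv.addRight (2 * k) ∈ G := by
    intro k
    induction k using Int.induction_on with
    | zero => simpa using G.one_mem
    | succ k ih =>
      have : (2 : ℤ) * (k + 1) = 2 * k + 2 := by ring
      rw [this, addRight_add]
      exact G.mul_mem ht ih
    | pred k ih =>
      have h2 : Equiv.addRight ((-2 : ℤ)) ∈ G := by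
        rw [← Equiv.neg_addRight]
        exact G.inv_mem ht
      have : (2 : ℤ) * (-k - 1) = 2 * (-k) + -2 := by ring
      rw [this, addRight_add]
      exact G.mul_mem h2 ih
  -- the key invariant: every g ∈ G commutes with P
  have hcomm : ∀ g ∈ G, Commute g P := by
    intro g hg
    rw [hG] at hg
    have hle : Subgroup.closure {Equiv.swap (0 : ℤ) 1, Equiv.addRight (2 : ℤ)}
        ≤ Subgroup.centralizer {P} := by
      rw [Subgroup.closure_le]
      rintro x (rfl | rfl)
      · intro y hy
        rw [Set.mem_singleton_iff] at hy
        subst hy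
        exact swap_comm_P.symm
      · intro y hy
        rw [Set.mem_singleton_iff] at hy
        subst hy
        exact addRight_comm_P.symm
    have := hle hg
    rw [Subgroup.mem_centralizer_iff] at this
    exact (this P rfl).symm
  have hinv : ∀ g ∈ G, g 1 = g 0 + e (g 0) := by
    intro g hg
    have h01 : P (0 : ℤ) = 1 := by simp [e_even Even.zero]
    have := hcomm g hg
    have habsorb : g (P 0) = P (g 0) := by
      have : (g * P) 0 = (P * g) 0 := by rw [this.eq]
      simpa [Equiv.Perm.mul_apply] using this
    rw [h01] at habsorb
    simpa using habsorb
  refine ⟨?_, ?_, ?_⟩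
  · -- transitivity
    intro a b
    rcases Int.even_or_odd (b - a) with ⟨k, hk⟩ | ⟨k, hk⟩
    · refine ⟨Equiv.addRight (2 * k), hshift k, ?_⟩
      simp only [Equiv.coe_addRight]
      omega
    · -- b - a odd; cases on parity of a
      rcases Int.even_or_odd a with ⟨m, hm⟩ | ⟨m, hm⟩
      · -- a even, b odd: shift a to 0, swap to 1, shift to b
        refine ⟨Equiv.addRight (2 * ((b - 1) / 2)) * Equiv.swap 0 1 *
          Equiv.addRight (2 * (-m)),
          G.mul_mem (G.mul_mem (hshift _) hs) (hshift _), ?_⟩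
        simp only [Equiv.Perm.mul_apply, Equiv.coe_addRight]
        have ha0 : a + 2 * (-m) = 0 := by omega
        rw [ha0, Equiv.swap_apply_left]
        omega
      · -- a odd, b even: shift a to 1, swap to 0, shift to b
        refine ⟨Equiv.addRight (2 * (b / 2)) * Equiv.swap 0 1 *
          Equiv.addRight (2 * (-m)),
          G.mul_mem (G.mul_mem (hshift _) hs) (hshift _), ?_⟩
        simp only [Equiv.Perm.mul_apply, Equiv.coe_addRight]
        have ha1 : a + 2 * (-m) = 1 := by omega
        rw [ha1, Equiv.swap_apply_right]
        omega
  · -- the orbit of (0,1)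
    ext ⟨x, y⟩
    simp only [Set.mem_setOf_eq, Prod.mk.injEq]
    constructor
    · rintro ⟨g, hg, h0, h1⟩
      exact ⟨g 0, by rw [h0], by rw [← h1, hinv g hg, h0]; rfl⟩
    · rintro ⟨a, hx, hy⟩
      subst hx
      rcases Int.even_or_odd x with ⟨m, hm⟩ | ⟨m, hm⟩
      · refine ⟨Equiv.addRight (2 * m), hshift m, by
          simp only [Equiv.coe_addRight]; omega, ?_⟩
        simp only [Equiv.coe_addRight]
        rw [hy]
        have : e x = 1 := e_even ⟨m, hm⟩
        unfold e at this
        omega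
      · refine ⟨Equiv.addRight (2 * m) * Equiv.swap 0 1,
          G.mul_mem (hshift m) hs, ?_, ?_⟩
        · simp only [Equiv.Perm.mul_apply, Equiv.coe_addRight,
            Equiv.swap_apply_left]
          omega
        · simp only [Equiv.Perm.mul_apply, Equiv.coe_addRight,
            Equiv.swap_apply_right]
          rw [hy]
          have : e x = -1 := e_odd ⟨m, by omega⟩
          unfold e at this
          omega
  · -- not 2-transitive
    intro h
    obtain ⟨g, hg, h0, h1⟩ := h 0 1 0 2 (by norm_num) (by norm_num)
    have := hinv g hg
    rw [h0, h1] at this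
    rw [e_even Even.zero] at this
    norm_num at this
end

section
/- Let K|k be a separable field extension of degree > 2. Then the map x ↦ 1/x on the projective space P_k(K) = K^×/k^× is not a collineation, i.e., it sends some triple of collinear points to a non-collinear triple. -/
open Polynomial IntermediateField Cardinal

section Aux
variable {k K : Type*} [Field k] [Field K] [Algebra k K]

/-- Three vectors, each outside the span of the previous ones, are independent. -/
lemma aux_indep3 {a b c : K} (ha : a ≠ 0) (hb : b ∉ Submodule.span k {a})
    (hc : c ∉ Submodule.span k {a, b}) : LinearIndependent k ![c, b, a] := by
  rw [show ![c, b, a] = Fin.cons c ![b, a] from rfl, linearIndependent_fin_cons]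
  refine ⟨?_, ?_⟩
  · rw [show ![b, a] = Fin.cons b ![a] from rfl, linearIndependent_fin_cons]
    refine ⟨?_, ?_⟩
    · exact linearIndependent_unique_iff.mpr ha
    · simpa using hb
  · simpa [Set.pair_comm] using hc

lemma aux_three_le_rank {M : Type*} [AddCommGroup M] [Module k M]
    (w : Fin 3 → M) (hw : LinearIndependent k w) : 3 ≤ Module.rank k M := by
  have h := hw.cardinal_lift_le_rank
  rw [Cardinal.mk_fin] at h
  have h3 : ((3 : ℕ) : Cardinal) ≤ Module.rank k M := by
    simpa using h
  simpa using h3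

lemma aux_three_le_rank_submodule (S : Submodule k K) (w : Fin 3 → K)
    (hw : LinearIndependent k w) (hmem : ∀ i, w i ∈ S) : 3 ≤ Module.rank k S := by
  refine aux_three_le_rank (fun i => (⟨w i, hmem i⟩ : S)) ?_
  exact LinearIndependent.of_comp S.subtype hw

/-- `1, γ, γ²` are linearly independent when the minimal polynomial has degree > 2. -/
lemma aux_pows {γ : K} (hint : IsIntegral k γ) (hdeg : 2 < (minpoly k γ).natDegree)
    {a b c : k}
    (h : algebraMap k K a * γ ^ 2 + algebraMap k K b * γ + algebraMap k K c = 0) :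
    a = 0 ∧ b = 0 ∧ c = 0 := by
  set p : k[X] := C a * X ^ 2 + C b * X + C c with hp
  have hev : aeval γ p = 0 := by
    simp only [hp, map_add, map_mul, map_pow, aeval_C, aeval_X]
    exact h
  have hp0 : p = 0 := by
    by_contra hne
    have h1 := minpoly.degree_le_of_ne_zero k γ hne hev
    have h2 : p.degree ≤ 2 := degree_quadratic_le
    have h3 : (minpoly k γ).degree = ((minpoly k γ).natDegree : WithBot ℕ) :=
      degree_eq_natDegree (minpoly.ne_zero hint)
    rw [h3] at h1
    have : ((minpoly k γ).natDegree : WithBot ℕ) ≤ 2 := h1.trans h2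
    have : (minpoly k γ).natDegree ≤ 2 := by exact_mod_cast this
    omega
  refine ⟨?_, ?_, ?_⟩
  · have := congrArg (fun q => Polynomial.coeff q 2) hp0
    simpa [hp] using this
  · have := congrArg (fun q => Polynomial.coeff q 1) hp0
    simpa [hp] using this
  · have := congrArg (fun q => Polynomial.coeff q 0) hp0
    simpa [hp] using this

end Aux

/-- Let `K | k` be a separable field extension of degree `> 2`. Then the map
`x ↦ 1/x` on the projective space `ℙ_k(K) = K^× / k^×` is not a collineation:
it sends some triple of collinear points (nonzero vectors spanning a subspace of
dimension ≤ 2) to a non-collinear triple. -/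
theorem inverse_map_not_collineation (k K : Type*) [Field k] [Field K]
    [Algebra k K] [Algebra.IsSeparable k K] (hdeg : 2 < Module.rank k K) :
    ∃ x y z : K, x ≠ 0 ∧ y ≠ 0 ∧ z ≠ 0 ∧
      Module.rank k (Submodule.span k {x, y, z}) ≤ 2 ∧
      ¬ Module.rank k (Submodule.span k {x⁻¹, y⁻¹, z⁻¹}) ≤ 2 := by
  classical
  -- Step 1: find u ∉ span {1}
  have hu : ∃ u : K, u ∉ Submodule.span k {(1 : K)} := by
    by_contra hcon
    push_neg at hcon
    have htop : Submodule.span k {(1 : K)} = ⊤ := by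
      rw [Submodule.eq_top_iff']; exact hcon
    have hK : Module.rank k K ≤ #({(1 : K)} : Set K) := by
      rw [← rank_top k K, ← htop]; exact rank_span_le _
    rw [Cardinal.mk_singleton] at hK
    exact absurd (hK.trans (by norm_num)) (not_le.mpr hdeg)
  obtain ⟨u, hu⟩ := hu
  -- Step 2: find v ∉ span {1, u}
  have hv : ∃ v : K, v ∉ Submodule.span k {(1 : K), u} := by
    by_contra hcon
    push_neg at hcon
    have htop : Submodule.span k {(1 : K), u} = ⊤ := by
      rw [Submodule.eq_top_iff']; exact hcon
    have hK0 : Module.rank k K ≤ #({(1 : K), u} : Set K) := by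
      rw [← rank_top k K, ← htop]; exact rank_span_le _
    have hK : Module.rank k K ≤ 2 := by
      refine hK0.trans (le_trans Cardinal.mk_insert_le ?_)
      rw [Cardinal.mk_singleton]
      norm_num
    exact absurd hK (not_le.mpr hdeg)
  obtain ⟨v, hv⟩ := hv
  -- the three vectors 1, u, v are linearly independent
  have hindep : LinearIndependent k ![v, u, (1 : K)] :=
    aux_indep3 one_ne_zero hu hv
  -- Step 3: L = k(u, v) is a finite separable extension with rank ≥ 3
  set L : IntermediateField k K := IntermediateField.adjoin k {u, v} with hL
  have hfin : FiniteDimensional k L := by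
    apply IntermediateField.finiteDimensional_adjoin
    intro x _
    exact Algebra.IsSeparable.isIntegral k x
  have hmem : ∀ i, (![v, u, (1 : K)]) i ∈ L := by
    intro i
    fin_cases i
    · exact IntermediateField.subset_adjoin k {u, v} (by simp)
    · exact IntermediateField.subset_adjoin k {u, v} (by simp)
    · exact one_mem L
  have hrankL : 3 ≤ Module.rank k L := by
    refine aux_three_le_rank (fun i => (⟨(![v, u, (1:K)]) i, hmem i⟩ : L)) ?_
    exact LinearIndependent.of_comp (L.val.toLinearMap) hindep
  have hfinrankL : 2 < Module.finrank k L := by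
    have he := Module.finrank_eq_rank k L
    rw [← he] at hrankL
    have h3 : (3 : ℕ) ≤ Module.finrank k L := by exact_mod_cast hrankL
    omega
  -- Step 4: primitive element of L
  haveI : Algebra.IsSeparable k L := Algebra.isSeparable_tower_bot_of_isSeparable k L K
  obtain ⟨α, hα⟩ := Field.exists_primitive_element k L
  have hintα : IsIntegral k α := Algebra.IsSeparable.isIntegral k α
  have hdegα : 2 < (minpoly k α).natDegree := by
    have hfr := IntermediateField.adjoin.finrank hintα
    rw [hα, IntermediateField.finrank_top'] at hfr
    omega
  set γ : K := algebraMap L K α with hγ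
  have hminγ : minpoly k γ = minpoly k α :=
    minpoly.algHom_eq (IsScalarTower.toAlgHom k L K) (algebraMap L K).injective α
  have hint : IsIntegral k γ := Algebra.IsSeparable.isIntegral k γ
  have hdegγ : 2 < (minpoly k γ).natDegree := by rw [hminγ]; exact hdegα
  -- Step 5: the triple 1, γ, 1 + γ
  have hy : γ ≠ 0 := by
    intro h0
    have := aux_pows hint hdegγ (a := 0) (b := 1) (c := 0) (by simp [h0])
    exact one_ne_zero this.2.1
  have hz : (1 : K) + γ ≠ 0 := by
    intro h0
    have := aux_pows hint hdegγ (a := 0) (b := 1) (c := 1)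
      (by
        simp only [map_zero, map_one, zero_mul, one_mul, zero_add]
        linear_combination h0)
    exact one_ne_zero this.2.1
  refine ⟨1, γ, 1 + γ, one_ne_zero, hy, hz, ?_, ?_⟩
  · -- collinear: span {1, γ, 1+γ} has rank ≤ 2
    have hsub : Submodule.span k {(1 : K), γ, 1 + γ} ≤ Submodule.span k {(1 : K), γ} := by
      rw [Submodule.span_le]
      intro w hw
      simp only [Set.mem_insert_iff, Set.mem_singleton_iff] at hw
      rcases hw with rfl | rfl | rfl
      · exact Submodule.subset_span (by simp)
      · exact Submodule.subset_span (by simp)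
      · exact add_mem (Submodule.subset_span (by simp)) (Submodule.subset_span (by simp))
    refine le_trans (Submodule.rank_mono hsub) ?_
    refine le_trans (rank_span_le _) ?_
    refine le_trans Cardinal.mk_insert_le ?_
    rw [Cardinal.mk_singleton]
    norm_num
  · -- non-collinear: span of inverses has rank ≥ 3
    intro hle
    have hindep' : LinearIndependent k ![(1 : K), γ⁻¹, (1 + γ)⁻¹] := by
      rw [Fintype.linearIndependent_iff]
      intro g hg
      rw [Fin.sum_univ_three] at hg
      simp only [Matrix.cons_val_zero, Matrix.cons_val_one, Matrix.head_cons,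
        Matrix.cons_val_two, Matrix.tail_cons, Algebra.smul_def] at hg
      have hrel : algebraMap k K (g 0) * γ ^ 2
          + algebraMap k K (g 0 + g 1 + g 2) * γ + algebraMap k K (g 1) = 0 := by
        rw [map_add, map_add]
        field_simp at hg
        linear_combination hg
      obtain ⟨h1, h2, h3⟩ := aux_pows hint hdegγ hrel
      have h4 : g 2 = 0 := by
        rw [h1, h3] at h2
        simpa using h2
      intro i
      fin_cases i
      · exact h1
      · exact h3
      · exact h4
    have hmem' : ∀ i, (![(1 : K), γ⁻¹, (1 + γ)⁻¹]) i
        ∈ Submodule.span k {(1 : K)⁻¹, γ⁻¹, (1 + γ)⁻¹} := by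
      intro i
      fin_cases i
      · exact Submodule.subset_span (by simp)
      · exact Submodule.subset_span (by simp)
      · exact Submodule.subset_span (by simp)
    have h3le := aux_three_le_rank_submodule _ _ hindep' hmem'
    have : (3 : Cardinal) ≤ 2 := h3le.trans hle
    norm_num at this
end

section
/- Let V be a vector space over a finite field k, h̃ an injective self-map of V∖{0}, J ⊂ V a finite set such that both J and h̃(J) are linearly independent, and P₀ ⊂ P₁ ⊂ P₂ ⊂ … a flag of subspaces with J ⊂ P₀, dim Pᵢ = |J| + i, and ⋃ᵢ Pᵢ = V. Then there exist vectors eᵢ ∈ Pᵢ∖P_{i−1} such that J ∪ {e₁, e₂, …} is a basis of V and its image under h̃ consists of linearly independent vectors. -/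
open Module Submodule

section Aux

variable {k V : Type*} [Field k] [AddCommGroup V] [Module k V]

open Classical in
/-- Choose a vector in `P (m+1) \ P m` whose image under `h` avoids `W`, if one exists. -/
noncomputable def pickVec (h : V → V) (P : ℕ → Submodule k V) (m : ℕ) (W : Submodule k V) : V :=
  if hex : ∃ v, v ∈ P (m + 1) ∧ v ∉ P m ∧ h v ∉ W then hex.choose else 0

lemma pickVec_spec (h : V → V) (P : ℕ → Submodule k V) (m : ℕ) (W : Submodule k V)
    (hex : ∃ v, v ∈ P (m + 1) ∧ v ∉ P m ∧ h v ∉ W) :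
    pickVec h P m W ∈ P (m + 1) ∧ pickVec h P m W ∉ P m ∧ h (pickVec h P m W) ∉ W := by
  classical
  simp only [pickVec, dif_pos hex]
  exact hex.choose_spec

/-- The recursively constructed sequence of (new basis vector, span of `h`-images so far). -/
noncomputable def auxSeq (h : V → V) (P : ℕ → Submodule k V) (J : Finset V) :
    ℕ → V × Submodule k V
  | 0 => (0, Submodule.span k (h '' (J : Set V)))
  | (n + 1) =>
      ((pickVec h P n (auxSeq h P J n).2),
        (auxSeq h P J n).2 ⊔ Submodule.span k {h (pickVec h P n (auxSeq h P J n).2)})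

lemma keystep
    (k : Type*) [Field k] [Finite k] (V : Type*) [AddCommGroup V] [Module k V]
    (h : V → V) (hmap : ∀ v : V, v ≠ 0 → h v ≠ 0)
    (hinj : Set.InjOn h {v : V | v ≠ 0})
    (Q Q' : Submodule k V) [FiniteDimensional k Q'] (hle : Q ≤ Q')
    (hQ' : finrank k Q' = finrank k Q + 1)
    (W : Submodule k V) [FiniteDimensional k W] (hW : finrank k W ≤ finrank k Q) :
    ∃ v, v ∈ Q' ∧ v ∉ Q ∧ h v ∉ W := by
  classical
  haveI : Fintype k := Fintype.ofFinite k
  haveI : FiniteDimensional k Q := Submodule.finiteDimensional_of_le hle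
  haveI : Finite ↥Q' := Module.finite_of_finite k
  haveI : Finite ↥Q := Module.finite_of_finite k
  haveI : Finite ↥W := Module.finite_of_finite k
  haveI : Fintype ↥Q' := Fintype.ofFinite _
  haveI : Fintype ↥Q := Fintype.ofFinite _
  haveI : Fintype ↥W := Fintype.ofFinite _
  by_contra hcon
  push_neg at hcon
  set q := Fintype.card k with hq
  have hq2 : 2 ≤ q := Fintype.one_lt_card
  set n := finrank k Q with hn
  set A : Set V := (Q' : Set V) \ (Q : Set V) with hA
  set B : Set V := (W : Set V) \ {0} with hB
  have hfinQ' : (Q' : Set V).Finite := Q'.carrier.toFinite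
  have hfinW : (W : Set V).Finite := W.carrier.toFinite
  have hBfin : B.Finite := hfinW.diff
  have hmapsto : ∀ a ∈ A, h a ∈ B := by
    intro a ha
    obtain ⟨ha1, ha2⟩ := ha
    have hane : a ≠ 0 := fun h0 => ha2 (h0 ▸ Q.zero_mem)
    exact ⟨hcon a ha1 ha2, hmap a hane⟩
  have hinjA : Set.InjOn h A := hinj.mono (by
    intro a ha
    exact fun h0 => ha.2 (h0 ▸ Q.zero_mem))
  have hcard : A.ncard ≤ B.ncard := Set.ncard_le_ncard_of_injOn h hmapsto hinjA hBfin
  have cQ' : (Q' : Set V).ncard = q ^ (n + 1) := by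
    rw [← Nat.card_coe_set_eq, Nat.card_eq_fintype_card]
    rw [show Fintype.card (Q' : Set V) = Fintype.card Q' from Fintype.card_congr (Equiv.refl _)]
    rw [card_eq_pow_finrank (K := k), hQ']
  have cQ : (Q : Set V).ncard = q ^ n := by
    rw [← Nat.card_coe_set_eq, Nat.card_eq_fintype_card]
    rw [show Fintype.card (Q : Set V) = Fintype.card Q from Fintype.card_congr (Equiv.refl _)]
    rw [card_eq_pow_finrank (K := k)]
  have cW : (W : Set V).ncard ≤ q ^ n := by
    rw [← Nat.card_coe_set_eq, Nat.card_eq_fintype_card]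
    rw [show Fintype.card (W : Set V) = Fintype.card W from Fintype.card_congr (Equiv.refl _)]
    rw [card_eq_pow_finrank (K := k)]
    exact Nat.pow_le_pow_right (by omega) hW
  have cA : A.ncard = q ^ (n + 1) - q ^ n := by
    rw [hA, Set.ncard_diff (show (Q : Set V) ⊆ (Q' : Set V) from hle) (hfinQ'.subset hle),
      cQ', cQ]
  have cB : B.ncard ≤ q ^ n - 1 := by
    have : B.ncard = (W : Set V).ncard - 1 := by
      rw [hB, Set.ncard_diff (Set.singleton_subset_iff.mpr W.zero_mem) (Set.finite_singleton 0),
        Set.ncard_singleton]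
    omega
  have h1 : 1 ≤ q ^ n := Nat.one_le_pow _ _ (by omega)
  have h2 : 2 * q ^ n ≤ q ^ (n + 1) := by
    rw [pow_succ, mul_comm]
    exact Nat.mul_le_mul le_rfl hq2
  omega

end Aux

/-- Let `V` be a vector space over a finite field `k`, `h` an injective self-map of
`V ∖ {0}`, `J ⊂ V` a finite set such that both `J` and `h(J)` are linearly
independent, and `P₀ ⊂ P₁ ⊂ …` an exhausting flag of subspaces with `J ⊆ P₀` and
`dim Pᵢ = |J| + i`. Then there exist vectors `eᵢ ∈ Pᵢ ∖ P_{i−1}` (for `i ≥ 1`) such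
that `J ∪ {e₁, e₂, …}` is a basis of `V` whose image under `h` is linearly
independent. -/
theorem exists_basis_with_independent_image
    (k : Type*) [Field k] [Finite k] (V : Type*) [AddCommGroup V] [Module k V]
    (h : V → V) (hmap : ∀ v : V, v ≠ 0 → h v ≠ 0)
    (hinj : Set.InjOn h {v : V | v ≠ 0})
    (J : Finset V) (hJ : LinearIndependent k (Subtype.val : ↥(J : Set V) → V))
    (hhJ : LinearIndependent k (Subtype.val : ↥(h '' (J : Set V)) → V))
    (P : ℕ → Submodule k V) (hmono : Monotone P) (hJP : (J : Set V) ⊆ P 0)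
    (hdim : ∀ i, Module.finrank k (P i) = J.card + i)
    (hexh : ⨆ i, P i = ⊤) :
    ∃ e : ℕ → V, (∀ i : ℕ, e (i + 1) ∈ P (i + 1) ∧ e (i + 1) ∉ P i) ∧
      LinearIndependent k
        (Subtype.val : ↥((J : Set V) ∪ Set.range (fun i : ℕ => e (i + 1)) : Set V) → V) ∧
      Submodule.span k ((J : Set V) ∪ Set.range (fun i : ℕ => e (i + 1))) = ⊤ ∧
      LinearIndependent k
        (Subtype.val : ↥
          (h '' ((J : Set V) ∪ Set.range (fun i : ℕ => e (i + 1))) : Set V) → V) := by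
  classical
  -- finite-dimensionality of the flag
  haveI hfdP : ∀ i, FiniteDimensional k (P i) := by
    intro i
    haveI : FiniteDimensional k (P (i + 1)) :=
      FiniteDimensional.of_finrank_pos (by rw [hdim]; omega)
    exact Submodule.finiteDimensional_of_le (hmono (Nat.le_succ i))
  set e : ℕ → V := fun n => (auxSeq h P J n).1 with he
  set W : ℕ → Submodule k V := fun n => (auxSeq h P J n).2 with hW
  have hW0 : W 0 = Submodule.span k (h '' (J : Set V)) := rfl
  have hWsucc : ∀ n, W (n + 1) = W n ⊔ Submodule.span k {h (e (n + 1))} := fun n => rfl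
  have hesucc : ∀ n, e (n + 1) = pickVec h P n (W n) := fun n => rfl
  -- the invariant: W n is finite-dimensional of dimension ≤ J.card + n
  have hWfd : ∀ n, FiniteDimensional k (W n) ∧ finrank k (W n) ≤ J.card + n := by
    intro n
    induction n with
    | zero =>
      constructor
      · exact FiniteDimensional.span_of_finite k ((J.finite_toSet).image h)
      · rw [hW0, ← Finset.coe_image]
        exact le_trans (finrank_span_finset_le_card _) (Finset.card_image_le)
    | succ n ih =>
      obtain ⟨ih1, ih2⟩ := ih
      haveI := ih1
      haveI : FiniteDimensional k (Submodule.span k {h (e (n + 1))}) :=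
        FiniteDimensional.span_of_finite k (Set.finite_singleton _)
      constructor
      · rw [hWsucc]; infer_instance
      · rw [hWsucc]
        refine le_trans (Submodule.finrank_add_le_finrank_add_finrank _ _) ?_
        have : finrank k (Submodule.span k ({h (e (n + 1))} : Set V)) ≤ 1 := by
          rw [← Finset.coe_singleton]
          exact le_trans (finrank_span_finset_le_card _) (by simp)
        omega
  -- the choice at each step succeeds
  have hgood : ∀ n, e (n + 1) ∈ P (n + 1) ∧ e (n + 1) ∉ P n ∧ h (e (n + 1)) ∉ W n := by
    intro n
    rw [hesucc]
    refine pickVec_spec h P n (W n) ?_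
    haveI := (hWfd n).1
    exact keystep k V h hmap hinj (P n) (P (n + 1)) (hmono (Nat.le_succ n))
      (by rw [hdim, hdim]; omega) (W n) (by rw [hdim]; exact (hWfd n).2)
  have hWmono : Monotone W := by
    refine monotone_nat_of_le_succ fun n => ?_
    rw [hWsucc]; exact le_sup_left
  have hhemem : ∀ n, h (e (n + 1)) ∈ W (n + 1) := by
    intro n
    rw [hWsucc]
    exact Submodule.mem_sup_right (Submodule.mem_span_singleton_self _)
  -- the finite approximations
  set S : ℕ → Finset V := fun n => Nat.rec J (fun m s => insert (e (m + 1)) s) n with hS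
  have hS0 : S 0 = J := rfl
  have hSsucc : ∀ n, S (n + 1) = insert (e (n + 1)) (S n) := fun n => rfl
  have hSmem : ∀ n x, x ∈ S n ↔ x ∈ J ∨ ∃ j, j < n ∧ x = e (j + 1) := by
    intro n
    induction n with
    | zero => simp [hS0]
    | succ n ih =>
      intro x
      rw [hSsucc, Finset.mem_insert, ih]
      constructor
      · rintro (rfl | hx | ⟨j, hj, rfl⟩)
        · exact Or.inr ⟨n, by omega, rfl⟩
        · exact Or.inl hx
        · exact Or.inr ⟨j, by omega, rfl⟩
      · rintro (hx | ⟨j, hj, rfl⟩)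
        · exact Or.inr (Or.inl hx)
        · rcases Nat.lt_succ_iff_lt_or_eq.mp hj with hj' | rfl
          · exact Or.inr (Or.inr ⟨j, hj', rfl⟩)
          · exact Or.inl rfl
  -- S n lives in P n
  have hSP : ∀ n, (S n : Set V) ⊆ P n := by
    intro n
    induction n with
    | zero => exact hJP
    | succ n ih =>
      rw [hSsucc]
      push_cast
      refine Set.insert_subset (hgood n).1 (ih.trans ?_)
      exact hmono (Nat.le_succ n)
  -- e (n+1) is not in S n
  have heS : ∀ n, e (n + 1) ∉ S n := fun n hmem => (hgood n).2.1 (hSP n hmem)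
  -- cardinality of S n
  have hScard : ∀ n, (S n).card = J.card + n := by
    intro n
    induction n with
    | zero => rfl
    | succ n ih =>
      rw [hSsucc, Finset.card_insert_of_notMem (heS n), ih]
      omega
  -- linear independence of S n
  have hSindep : ∀ n, LinearIndependent k ((↑) : ((S n : Set V)) → V) := by
    intro n
    induction n with
    | zero => exact hJ
    | succ n ih =>
      rw [hSsucc, Finset.coe_insert]
      have hx : e (n + 1) ∉ Submodule.span k (S n : Set V) := fun hmem =>
        (hgood n).2.1 (Submodule.span_le.mpr (hSP n) hmem)
      exact LinearIndepOn.id_insert ih hx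
  -- span of S n is P n
  have hSspan : ∀ n, Submodule.span k (S n : Set V) = P n := by
    intro n
    refine Submodule.eq_of_le_of_finrank_eq (Submodule.span_le.mpr (hSP n)) ?_
    rw [finrank_span_finset_eq_card (hSindep n), hScard, hdim]
  -- h-images of S n are in W n
  have hhSW : ∀ n, h '' (S n : Set V) ⊆ W n := by
    intro n
    induction n with
    | zero => exact Submodule.subset_span
    | succ n ih =>
      rw [hSsucc]
      push_cast
      rw [Set.image_insert_eq]
      refine Set.insert_subset (hhemem n) (ih.trans ?_)
      exact hWmono (Nat.le_succ n)
  -- linear independence of h '' S n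
  have hhSindep : ∀ n, LinearIndependent k ((↑) : (h '' (S n : Set V)) → V) := by
    intro n
    induction n with
    | zero => exact hhJ
    | succ n ih =>
      have himg : (h '' ((S (n + 1) : Finset V) : Set V)) =
          insert (h (e (n + 1))) (h '' (S n : Set V)) := by
        rw [hSsucc, Finset.coe_insert, Set.image_insert_eq]
      rw [himg]
      have hx : h (e (n + 1)) ∉ Submodule.span k (h '' (S n : Set V)) := fun hmem =>
        (hgood n).2.2 (Submodule.span_le.mpr (hhSW n) hmem)
      exact LinearIndepOn.id_insert ih hx
  -- the union
  have hSmono : Monotone fun n => (S n : Set V) := by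
    refine monotone_nat_of_le_succ fun n => ?_
    rw [hSsucc]; push_cast; exact Set.subset_insert _ _
  have hUnion : (⋃ n, (S n : Set V)) =
      (J : Set V) ∪ Set.range (fun i : ℕ => e (i + 1)) := by
    ext x
    simp only [Set.mem_iUnion, Finset.mem_coe, Set.mem_union, Set.mem_range]
    constructor
    · rintro ⟨n, hn⟩
      rcases (hSmem n x).mp hn with hx | ⟨j, _, rfl⟩
      · exact Or.inl hx
      · exact Or.inr ⟨j, rfl⟩
    · rintro (hx | ⟨j, rfl⟩)
      · exact ⟨0, hx⟩
      · exact ⟨j + 1, (hSmem (j + 1) _).mpr (Or.inr ⟨j, by omega, rfl⟩)⟩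
  refine ⟨e, fun i => ⟨(hgood i).1, (hgood i).2.1⟩, ?_, ?_, ?_⟩
  · rw [← hUnion]
    exact linearIndepOn_iUnion_of_directed (v := id) (hSmono.directed_le) hSindep
  · rw [← hUnion]
    refine top_unique ?_
    rw [← hexh]
    refine iSup_le fun n => ?_
    rw [← hSspan n]
    exact Submodule.span_mono (Set.subset_iUnion (fun n => ((S n : Set V))) n)
  · rw [← hUnion, Set.image_iUnion]
    refine linearIndepOn_iUnion_of_directed (v := id) ?_ hhSindep
    exact (Set.monotone_image.comp hSmono).directed_le
end

section
/- Let V be an infinite-dimensional 𝔽₂-vector space with basis B, let n ≥ 2 be even, and call a subset of V n-closed if it contains the sum of any n of its linearly independent elements. Then the minimal n-closed subset of V containing all one-element sums of B (i.e., B itself) is V∖{0}. -/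
open Finset

/-- A subset `S` of an `𝔽₂`-vector space is `n`-closed if it contains the sum of any
`n` linearly independent elements of `S`. -/
def NClosed {V : Type*} [AddCommGroup V] [Module (ZMod 2) V] (n : ℕ) (S : Set V) : Prop :=
  ∀ f : Fin n → V, (∀ i, f i ∈ S) → LinearIndependent (ZMod 2) f → (∑ i, f i) ∈ S

section Aux

variable {V : Type*} [AddCommGroup V] [Module (ZMod 2) V] {ι : Type*}

lemma myTwo (x : V) : x + x = 0 := by
  have h : (2 : ZMod 2) • x = x + x := two_smul _ x
  rw [show (2 : ZMod 2) = 0 by decide, zero_smul] at h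
  exact h.symm

lemma sum_symmDiff' [DecidableEq ι] (b : ι → V) (s t : Finset ι) :
    (∑ i ∈ symmDiff s t, b i) = (∑ i ∈ s, b i) + (∑ i ∈ t, b i) := by
  have hs : (∑ i ∈ s \ t, b i) + ∑ i ∈ s ∩ t, b i = ∑ i ∈ s, b i := by
    rw [← Finset.sdiff_inter_self_left s t]
    exact Finset.sum_sdiff Finset.inter_subset_left
  have ht : (∑ i ∈ t \ s, b i) + ∑ i ∈ s ∩ t, b i = ∑ i ∈ t, b i := by
    rw [Finset.inter_comm, ← Finset.sdiff_inter_self_left t s]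
    exact Finset.sum_sdiff Finset.inter_subset_left
  have hsd : symmDiff s t = (s \ t) ∪ (t \ s) := by
    ext x
    simp only [Finset.mem_symmDiff, Finset.mem_union, Finset.mem_sdiff]
  rw [hsd, Finset.sum_union disjoint_sdiff_sdiff, ← hs, ← ht]
  have h2 := myTwo (∑ i ∈ s ∩ t, b i)
  calc (∑ i ∈ s \ t, b i) + (∑ i ∈ t \ s, b i)
      = ((∑ i ∈ s \ t, b i) + (∑ i ∈ t \ s, b i)) + 0 := by rw [add_zero]
    _ = ((∑ i ∈ s \ t, b i) + ∑ i ∈ s ∩ t, b i) +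
        ((∑ i ∈ t \ s, b i) + ∑ i ∈ s ∩ t, b i) := by rw [← h2]; abel

lemma repr_sum_apply (b : Module.Basis ι (ZMod 2) V) (s : Finset ι) (j : ι) [DecidableEq ι] :
    b.repr (∑ i ∈ s, b i) j = if j ∈ s then 1 else 0 := by
  rw [map_sum]
  rw [Finsupp.finset_sum_apply]
  simp [Module.Basis.repr_self, Finsupp.single_apply]

/-- The key move: from an element of `S` which is a sum over `s`, together with `n-1`
basis vectors indexed by `E`, produce the sum over the symmetric difference. -/
lemma move [DecidableEq ι] {n : ℕ} (hn : 2 ≤ n) (b : Module.Basis ι (ZMod 2) V) {S : Set V}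
    (hB : Set.range b ⊆ S) (hS : NClosed n S) (s E : Finset ι)
    (hE : E.card = n - 1) (hsE : ¬ s ⊆ E) (hs : (∑ i ∈ s, b i) ∈ S) :
    (∑ i ∈ symmDiff s E, b i) ∈ S := by
  obtain ⟨k, rfl⟩ : ∃ k, n = k + 1 := ⟨n - 1, by omega⟩
  have hEk : E.card = k := by omega
  let eqv : Fin k ≃ E := ((E.equivFin).trans (finCongr hEk)).symm
  let e : Fin k → ι := fun i => (eqv i : ι)
  have he_inj : Function.Injective e := by
    intro i j hij
    exact eqv.injective (Subtype.ext hij)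
  have he_range : Set.range e = ↑E := by
    ext x
    constructor
    · rintro ⟨i, rfl⟩
      exact (eqv i).2
    · intro hx
      exact ⟨eqv.symm ⟨x, hx⟩, by simp [e]⟩
  have hsum_e : ∑ i : Fin k, b (e i) = ∑ i ∈ E, b i := by
    have h1 : ∑ i : Fin k, b (e i) = ∑ x : E, b ↑x := Equiv.sum_comp eqv (fun x : E => b ↑x)
    rw [h1]
    exact Finset.sum_coe_sort E b
  set f : Fin (k + 1) → V := Fin.cons (∑ i ∈ s, b i) (fun i => b (e i)) with hf
  have hmem : ∀ i, f i ∈ S := by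
    intro i
    refine Fin.cases ?_ ?_ i
    · simpa [hf] using hs
    · intro j; simpa [hf] using hB ⟨e j, rfl⟩
  have hli : LinearIndependent (ZMod 2) f := by
    rw [hf]
    apply linearIndependent_fin_cons.mpr
    constructor
    · exact b.linearIndependent.comp e he_inj
    · rw [show (fun i : Fin k => b (e i)) = b ∘ e from rfl, Set.range_comp, he_range]
      intro hmem2
      rw [Module.Basis.mem_span_image] at hmem2
      apply hsE
      intro x hx
      have h1 : b.repr (∑ i ∈ s, b i) x = 1 := by rw [repr_sum_apply]; simp [hx]
      have hxsupp : x ∈ (b.repr (∑ i ∈ s, b i)).support := by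
        rw [Finsupp.mem_support_iff, h1]; exact one_ne_zero
      exact_mod_cast hmem2 hxsupp
  have hsum := hS f hmem hli
  rw [Fin.sum_univ_succ] at hsum
  simp only [hf, Fin.cons_zero, Fin.cons_succ] at hsum
  rw [hsum_e, ← sum_symmDiff' b s E] at hsum
  exact hsum

lemma step [Infinite ι] [DecidableEq ι] {n : ℕ} (hn : 2 ≤ n) (b : Module.Basis ι (ZMod 2) V)
    {S : Set V} (hB : Set.range b ⊆ S) (hS : NClosed n S) (m₀ j : ℕ)
    (hm₀ : ∀ s : Finset ι, s.card = m₀ → (∑ i ∈ s, b i) ∈ S)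
    (hj1 : j + 1 ≤ m₀) (hj2 : j ≤ n - 1) (t : Finset ι)
    (ht : t.card + 2 * j = m₀ + (n - 1)) : (∑ i ∈ t, b i) ∈ S := by
  -- choose A ⊆ t with |A| = n-1-j
  obtain ⟨A, hAt, hA⟩ := Finset.exists_subset_card_eq (s := t) (n := n - 1 - j) (by omega)
  -- choose D disjoint from t with |D| = j
  obtain ⟨u, htu, hu⟩ := Infinite.exists_superset_card_eq t (t.card + j) (by omega)
  set D := u \ t with hD
  have hDt : Disjoint D t := Finset.sdiff_disjoint
  have hDcard : D.card = j := by rw [hD, Finset.card_sdiff_of_subset htu]; omega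
  set s := (t \ A) ∪ D with hsdef
  have hdisj1 : Disjoint (t \ A) D := by
    exact Finset.disjoint_of_subset_left (Finset.sdiff_subset) hDt.symm
  have hscard : s.card = m₀ := by
    rw [hsdef, Finset.card_union_of_disjoint hdisj1, Finset.card_sdiff_of_subset hAt]
    omega
  set E := A ∪ D with hEdef
  have hdisjAD : Disjoint A D := by
    exact Finset.disjoint_of_subset_left hAt hDt.symm
  have hEcard : E.card = n - 1 := by
    rw [hEdef, Finset.card_union_of_disjoint hdisjAD]; omega
  have htA : (t \ A).Nonempty := by
    rw [← Finset.card_pos, Finset.card_sdiff_of_subset hAt]; omega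
  have hsE : ¬ s ⊆ E := by
    intro hsub
    obtain ⟨x, hx⟩ := htA
    have hxs : x ∈ s := Finset.mem_union_left _ hx
    have hxE := hsub hxs
    rw [hEdef, Finset.mem_union] at hxE
    rcases hxE with h | h
    · exact (Finset.mem_sdiff.mp hx).2 h
    · exact Finset.disjoint_left.mp hDt h (Finset.mem_sdiff.mp hx).1
  have hsymm : symmDiff s E = t := by
    ext x
    have hxA : x ∈ A → x ∈ t := fun h => hAt h
    have hxD : x ∈ D → x ∉ t := fun h => Finset.disjoint_left.mp hDt h
    simp only [Finset.mem_symmDiff, hsdef, hEdef, Finset.mem_union, Finset.mem_sdiff]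
    tauto
  have := move hn b hB hS s E hEcard hsE (hm₀ s hscard)
  rwa [hsymm] at this

lemma main_lemma [Infinite ι] [DecidableEq ι] {n : ℕ} (hn : 2 ≤ n) (heven : Even n)
    (b : Module.Basis ι (ZMod 2) V) {S : Set V} (hB : Set.range b ⊆ S) (hS : NClosed n S) :
    ∀ t : Finset ι, t.Nonempty → (∑ i ∈ t, b i) ∈ S := by
  obtain ⟨K, rfl⟩ : ∃ K, n = 2 * K + 2 := by
    obtain ⟨c, hc⟩ := heven; exact ⟨c - 1, by omega⟩
  have P1 : ∀ s : Finset ι, s.card = 1 → (∑ i ∈ s, b i) ∈ S := by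
    intro s hs
    obtain ⟨x, rfl⟩ := Finset.card_eq_one.mp hs
    simpa using hB ⟨x, rfl⟩
  have Pn : ∀ s : Finset ι, s.card = 2 * K + 2 → (∑ i ∈ s, b i) ∈ S := by
    intro s hs
    exact step hn b hB hS 1 0 P1 (by omega) (by omega) s (by omega)
  have Podd : ∀ j ≤ 2 * K + 1, ∀ s : Finset ι, s.card + 2 * j = 4 * K + 3 →
      (∑ i ∈ s, b i) ∈ S := by
    intro j hj s hscard
    exact step hn b hB hS (2 * K + 2) j Pn (by omega) (by omega) s (by omega)
  have Pn1 : ∀ s : Finset ι, s.card = 2 * K + 1 → (∑ i ∈ s, b i) ∈ S := by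
    intro s hs
    exact Podd (K + 1) (by omega) s (by omega)
  have key : ∀ m, ∀ t : Finset ι, t.card = m → t.Nonempty → (∑ i ∈ t, b i) ∈ S := by
    intro m
    induction m using Nat.strong_induction_on with
    | _ m IH =>
      intro t htcard htne
      have hmpos : 0 < m := htcard ▸ Finset.card_pos.mpr htne
      by_cases hbig : m ≥ 4 * K + 4
      · -- use step with m₀ = m - (2K+1), j = 0
        refine step hn b hB hS (m - (2 * K + 1)) 0 ?_ (by omega) (by omega) t (by omega)
        intro s hs
        exact IH (m - (2 * K + 1)) (by omega) s hs
          (Finset.card_pos.mp (by omega))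
      · push_neg at hbig
        rcases Nat.even_or_odd m with ⟨a, ha⟩ | ⟨a, ha⟩
        · -- m = 2a, 1 ≤ a ≤ 2K+1 : use step from size 2K+1 with j = 2K+1-a
          refine step hn b hB hS (2 * K + 1) (2 * K + 1 - a) Pn1 (by omega) (by omega)
            t (by omega)
        · -- m = 2a+1, a ≤ 2K+1
          exact Podd (2 * K + 1 - a) (by omega) t (by omega)
  intro t htne
  exact key t.card t rfl htne

end Aux

/-- Let `V` be an infinite-dimensional `𝔽₂`-vector space with basis `B` and `n ≥ 2`
even. The minimal `n`-closed subset of `V` containing `B` is `V ∖ {0}`. -/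
theorem nClosure_of_basis_even {V : Type*} [AddCommGroup V] [Module (ZMod 2) V]
    {ι : Type*} [Infinite ι] (b : Module.Basis ι (ZMod 2) V) (n : ℕ) (hn : 2 ≤ n)
    (heven : Even n) :
    ⋂₀ {S : Set V | Set.range b ⊆ S ∧ NClosed n S} = {v : V | v ≠ 0} := by
  classical
  apply Set.Subset.antisymm
  · -- the set of nonzero vectors is itself in the family
    apply Set.sInter_subset_of_mem
    constructor
    · intro x ⟨i, hi⟩
      simp only [Set.mem_setOf_eq, ← hi]
      exact b.ne_zero i
    · intro f hf hli
      simp only [Set.mem_setOf_eq]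
      intro h0
      have := Fintype.linearIndependent_iff.mp hli (fun _ => 1) (by simpa using h0)
      have h1 := this ⟨0, by omega⟩
      exact one_ne_zero h1
  · intro v hv
    rw [Set.mem_setOf_eq] at hv
    rw [Set.mem_sInter]
    rintro S ⟨hB, hS⟩
    set t := (b.repr v).support with htdef
    have hvt : v = ∑ i ∈ t, b i := by
      conv_lhs => rw [← b.linearCombination_repr v]
      rw [Finsupp.linearCombination_apply, Finsupp.sum]
      refine Finset.sum_congr rfl ?_
      intro i hi
      have hne : b.repr v i ≠ 0 := Finsupp.mem_support_iff.mp hi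
      have h1 : b.repr v i = 1 := by
        have : ∀ a : ZMod 2, a ≠ 0 → a = 1 := by decide
        exact this _ hne
      rw [h1, one_smul]
    have htne : t.Nonempty := by
      rw [Finset.nonempty_iff_ne_empty, htdef]
      intro hemp
      apply hv
      have h0 : b.repr v = 0 := Finsupp.support_eq_empty.mp hemp
      have h1 : b.repr v = b.repr 0 := by rw [h0]; simp
      exact b.repr.injective h1
    rw [hvt]
    exact main_lemma hn heven b hB hS t htne
end

section
/- Let V be an infinite-dimensional 𝔽₂-vector space with basis B, and let n ≥ 3 be odd. Then the minimal n-closed subset of V containing B equals the set of all sums of an odd number of elements of B. -/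
namespace NCAux
open Finset
set_option linter.unusedSectionVars false
variable {V : Type*} [AddCommGroup V] [Module (ZMod 2) V] {ι : Type*} (b : Module.Basis ι (ZMod 2) V)

lemma zmod2_eq_one {a : ZMod 2} (h : a ≠ 0) : a = 1 := by revert h; revert a; decide

lemma addself (x : V) : x + x = 0 := by
  have h : x + x = (1 + 1 : ZMod 2) • x := by rw [add_smul, one_smul]
  rw [h, show (1 + 1 : ZMod 2) = 0 by decide, zero_smul]

noncomputable def vec (A : Finset ι) : V := ∑ i ∈ A, b i

variable [DecidableEq ι]

lemma vec_singleton (i : ι) : vec b {i} = b i := by simp [vec]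

lemma vec_union {A B : Finset ι} (h : Disjoint A B) :
    vec b (A ∪ B) = vec b A + vec b B := Finset.sum_union h

lemma repr_vec (A : Finset ι) (j : ι) : b.repr (vec b A) j = if j ∈ A then 1 else 0 := by
  simp only [vec, map_sum, Finsupp.finset_sum_apply, Module.Basis.repr_self, Finsupp.single_apply]
  simp [Finset.sum_ite_eq' A j (fun _ => (1:ZMod 2))]

lemma support_vec (A : Finset ι) : (b.repr (vec b A)).support = A := by
  ext j; simp [Finsupp.mem_support_iff, repr_vec]

lemma vec_support (v : V) : vec b (b.repr v).support = v := by
  apply b.repr.injective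
  ext j
  rw [repr_vec]
  by_cases h : j ∈ (b.repr v).support
  · simp [h, (zmod2_eq_one (Finsupp.mem_support_iff.mp h)).symm]
  · simp [h, Finsupp.notMem_support_iff.mp h]

lemma coord_sum {J : Type*} [Fintype J] (C : J → Finset ι) (c : J → ZMod 2) (p : ι) :
    b.repr (∑ j, c j • vec b (C j)) p = ∑ j, c j * (if p ∈ C j then 1 else 0) := by
  rw [map_sum, Finsupp.finset_sum_apply]
  exact Finset.sum_congr rfl fun j _ => by rw [map_smul, Finsupp.smul_apply, repr_vec, smul_eq_mul]

lemma li_vec {J : Type*} [Fintype J] (C : J → Finset ι)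
    (h : ∀ c : J → ZMod 2, (∀ p : ι, ∑ j, c j * (if p ∈ C j then 1 else 0) = 0) → ∀ j, c j = 0) :
    LinearIndependent (ZMod 2) fun j => vec b (C j) := by
  apply Fintype.linearIndependent_iff.mpr
  intro c hc
  exact h c fun p => by rw [← coord_sum b C c p, hc, map_zero, Finsupp.zero_apply]

lemma nclosed_apply {n : ℕ} {S : Set V} (hC : NClosed n S) {J : Type*} [Fintype J]
    (hcard : Fintype.card J = n) (g : J → V) (hmem : ∀ j, g j ∈ S)
    (hli : LinearIndependent (ZMod 2) g) : (∑ j, g j) ∈ S := by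
  let e : Fin n ≃ J := (Fintype.equivFinOfCardEq hcard).symm
  have := hC (g ∘ e) (fun i => hmem (e i)) (hli.comp e e.injective)
  rwa [show ∑ i, (g ∘ e) i = ∑ j, g j from Equiv.sum_comp e g] at this

/-- vanishing sum over a subtype when the coordinate is not in the base set -/
lemma sum_coe_zero {B : Finset ι} {p : ι} (hp : p ∉ B) (c : ↥B → ZMod 2) :
    ∑ x : ↥B, c x * (if p ∈ ({(x : ι)} : Finset ι) then 1 else 0) = 0 := by
  apply Finset.sum_eq_zero
  intro x _
  have : p ∉ ({(x : ι)} : Finset ι) := by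
    simp only [Finset.mem_singleton]
    rintro rfl
    exact hp x.2
  simp [this]

/-- picking sum over a subtype at a coordinate in the base set -/
lemma sum_coe_pick {B : Finset ι} (x₀ : ↥B) (c : ↥B → ZMod 2) :
    ∑ x : ↥B, c x * (if (x₀ : ι) ∈ ({(x : ι)} : Finset ι) then 1 else 0) = c x₀ := by
  rw [Fintype.sum_eq_single x₀]
  · simp
  · intro x hx
    have : (x₀ : ι) ∉ ({(x : ι)} : Finset ι) := by
      simp only [Finset.mem_singleton]
      intro h
      exact hx (Subtype.ext h.symm)
    simp [this]

lemma disj_of_subset_compl {t A : Finset ι} (h : (↑t : Set ι) ⊆ (↑A : Set ι)ᶜ) :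
    Disjoint t A :=
  Finset.disjoint_left.mpr fun {x} hx ha => (h hx) ha

lemma mem_of_card_n {n : ℕ} {S : Set V} (hS : Set.range b ⊆ S) (hC : NClosed n S)
    (A : Finset ι) (hA : A.card = n) : vec b A ∈ S := by
  have hcard : Fintype.card ↥A = n := by simp [hA]
  have hli : LinearIndependent (ZMod 2) fun x : ↥A => b ↑x :=
    b.linearIndependent.comp _ Subtype.coe_injective
  have := nclosed_apply hC hcard (fun x : ↥A => b ↑x)
    (fun x => hS (Set.mem_range_self _)) hli
  rwa [show ∑ x : ↥A, b ↑x = vec b A from Finset.sum_coe_sort A (fun i => b i)] at this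

lemma step {n : ℕ} {S : Set V} (hS : Set.range b ⊆ S) (hC : NClosed n S)
    {A B : Finset ι} (hBA : B ⊆ A) (hB : B.card = n - 1) (hn : 1 ≤ n)
    (hw : vec b (A \ B) ∈ S) (hne : (A \ B).Nonempty) : vec b A ∈ S := by
  classical
  set C : ↥B ⊕ Unit → Finset ι :=
    Sum.elim (fun x => {(x : ι)}) (fun _ => A \ B) with hCdef
  have hcard : Fintype.card (↥B ⊕ Unit) = n := by
    simp [hB]; omega
  have hli : LinearIndependent (ZMod 2) fun j => vec b (C j) := by
    apply li_vec
    intro c hc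
    obtain ⟨p₀, hp₀⟩ := hne
    have h1 : c (Sum.inr ()) = 0 := by
      have h := hc p₀
      rw [Fintype.sum_sum_type] at h
      simp only [hCdef, Sum.elim_inl, Sum.elim_inr] at h
      rw [sum_coe_zero (Finset.mem_sdiff.mp hp₀).2] at h
      simpa [Finset.mem_sdiff.mp hp₀] using h
    intro j
    match j with
    | Sum.inr () => exact h1
    | Sum.inl x₀ =>
      have h := hc (↑x₀)
      rw [Fintype.sum_sum_type] at h
      simp only [hCdef, Sum.elim_inl, Sum.elim_inr] at h
      have hx₀ : (↑x₀ : ι) ∉ A \ B := fun hmem => (Finset.mem_sdiff.mp hmem).2 x₀.2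
      rw [sum_coe_pick x₀ (fun x => c (Sum.inl x))] at h
      simpa [hx₀] using h
  have hmem : ∀ j, vec b (C j) ∈ S := by
    rintro (x | u)
    · rw [hCdef]; simp only [Sum.elim_inl]; rw [vec_singleton]
      exact hS (Set.mem_range_self _)
    · exact hw
  have := nclosed_apply hC hcard (fun j => vec b (C j)) hmem hli
  have hsum : ∑ j, vec b (C j) = vec b A := by
    rw [Fintype.sum_sum_type]
    have e1 : ∑ x : ↥B, vec b (C (Sum.inl x)) = vec b B := by
      rw [show (fun x : ↥B => vec b (C (Sum.inl x))) = fun x : ↥B => b ↑x from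
        funext fun x => by rw [hCdef]; simp only [Sum.elim_inl]; exact vec_singleton b _]
      exact Finset.sum_coe_sort B (fun i => b i)
    rw [e1]
    simp only [hCdef, Sum.elim_inr, Finset.univ_unique, Finset.sum_singleton]
    rw [← vec_union b Finset.disjoint_sdiff, Finset.union_sdiff_of_subset hBA]
  rwa [hsum] at this

lemma gadget {n : ℕ} {S : Set V} [Infinite ι] (hS : Set.range b ⊆ S) (hC : NClosed n S)
    (hodd : Odd n) {A : Finset ι} (hrodd : Odd A.card)
    (h3 : 3 ≤ A.card) (hrn : A.card + 2 ≤ n) : vec b A ∈ S := by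
  classical
  obtain ⟨k, hk⟩ : ∃ k, n = A.card + 2 * k + 2 := by
    have h1 := Nat.odd_iff.mp hodd
    have h2 := Nat.odd_iff.mp hrodd
    exact ⟨(n - A.card - 2) / 2, by omega⟩
  obtain ⟨i₀, hi₀⟩ : A.Nonempty := Finset.card_pos.mp (by omega)
  set A' := A.erase i₀ with hA'
  have hinf : ∀ E : Finset ι, ((↑E : Set ι)ᶜ).Infinite :=
    fun E => E.finite_toSet.infinite_compl
  obtain ⟨D₁, hD₁sub, hD₁card⟩ := (hinf A).exists_subset_card_eq k
  obtain ⟨D₂, hD₂sub, hD₂card⟩ := (hinf (A ∪ D₁)).exists_subset_card_eq (k + 1)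
  obtain ⟨F, hFsub, hFcard⟩ := (hinf (A ∪ D₁ ∪ D₂)).exists_subset_card_eq (n - k - 1)
  have dD₁A : Disjoint D₁ A := disj_of_subset_compl hD₁sub
  have dD₂u : Disjoint D₂ (A ∪ D₁) := disj_of_subset_compl hD₂sub
  have dFu : Disjoint F (A ∪ D₁ ∪ D₂) := disj_of_subset_compl hFsub
  have dD₂A : Disjoint D₂ A := dD₂u.mono_right Finset.subset_union_left
  have dD₂D₁ : Disjoint D₂ D₁ := dD₂u.mono_right Finset.subset_union_right
  have dFA : Disjoint F A :=
    dFu.mono_right (Finset.subset_union_left.trans Finset.subset_union_left)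
  have dFD₁ : Disjoint F D₁ :=
    dFu.mono_right (Finset.subset_union_right.trans Finset.subset_union_left)
  have dFD₂ : Disjoint F D₂ := dFu.mono_right Finset.subset_union_right
  set D := D₁ ∪ D₂ with hD
  have hDcard : D.card = 2 * k + 1 := by
    rw [hD, Finset.card_union_of_disjoint dD₂D₁.symm]; omega
  set W₁ : Finset ι := {i₀} ∪ D₁ ∪ F with hW₁
  set W₂ : Finset ι := D₂ ∪ F with hW₂
  have hi₀D₁ : i₀ ∉ D₁ := fun h => Finset.disjoint_left.mp dD₁A h hi₀
  have hi₀D₂ : i₀ ∉ D₂ := fun h => Finset.disjoint_left.mp dD₂A h hi₀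
  have hi₀F : i₀ ∉ F := fun h => Finset.disjoint_left.mp dFA h hi₀
  have d1 : Disjoint ({i₀} : Finset ι) D₁ := Finset.disjoint_singleton_left.mpr hi₀D₁
  have d2 : Disjoint ({i₀} ∪ D₁) F :=
    Finset.disjoint_union_left.mpr ⟨Finset.disjoint_singleton_left.mpr hi₀F, dFD₁.symm⟩
  have hW₁card : W₁.card = n := by
    rw [hW₁, Finset.card_union_of_disjoint d2, Finset.card_union_of_disjoint d1]
    simp only [Finset.card_singleton]
    omega
  have hW₂card : W₂.card = n := by
    rw [hW₂, Finset.card_union_of_disjoint dFD₂.symm]; omega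
  have hw₁ : vec b W₁ ∈ S := mem_of_card_n b hS hC _ hW₁card
  have hw₂ : vec b W₂ ∈ S := mem_of_card_n b hS hC _ hW₂card
  set C : ↥A' ⊕ ↥D ⊕ Bool → Finset ι :=
    Sum.elim (fun x => {(x : ι)})
      (Sum.elim (fun x => {(x : ι)}) (fun t => if t then W₁ else W₂)) with hCdef
  have hA'card : A'.card = A.card - 1 := by rw [hA', Finset.card_erase_of_mem hi₀]
  have hcard : Fintype.card (↥A' ⊕ ↥D ⊕ Bool) = n := by
    simp [hA'card, hDcard]; omega
  -- membership facts for coordinates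
  have hmemW₁i₀ : i₀ ∈ W₁ := by
    rw [hW₁]; exact Finset.mem_union_left _ (Finset.mem_union_left _ (Finset.mem_singleton_self i₀))
  have hmemW₂i₀ : i₀ ∉ W₂ := by
    rw [hW₂]; simp [hi₀D₂, hi₀F]
  have hli : LinearIndependent (ZMod 2) fun j => vec b (C j) := by
    apply li_vec
    intro c hc
    have hFne : F.Nonempty := Finset.card_pos.mp (by omega)
    obtain ⟨f₀, hf₀⟩ := hFne
    have hf₀A : f₀ ∉ A := fun h => Finset.disjoint_left.mp dFA hf₀ h
    have hf₀A' : f₀ ∉ A' := fun h => hf₀A (Finset.mem_of_mem_erase (by rwa [hA'] at h))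
    have hf₀D : f₀ ∉ D := by
      rw [hD]
      simp only [Finset.mem_union]
      rintro (h | h)
      · exact Finset.disjoint_left.mp dFD₁ hf₀ h
      · exact Finset.disjoint_left.mp dFD₂ hf₀ h
    have hf₀W₁ : f₀ ∈ W₁ := by rw [hW₁]; exact Finset.mem_union_right _ hf₀
    have hf₀W₂ : f₀ ∈ W₂ := by rw [hW₂]; exact Finset.mem_union_right _ hf₀
    have hi₀A' : i₀ ∉ A' := by rw [hA']; exact Finset.notMem_erase i₀ A
    have hi₀D : i₀ ∉ D := by rw [hD]; simp [hi₀D₁, hi₀D₂]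
    have hTF : c (Sum.inr (Sum.inr true)) + c (Sum.inr (Sum.inr false)) = 0 := by
      have h := hc f₀
      rw [Fintype.sum_sum_type, Fintype.sum_sum_type, Fintype.sum_bool] at h
      simp only [hCdef, Sum.elim_inl, Sum.elim_inr] at h
      rw [sum_coe_zero hf₀A', sum_coe_zero hf₀D] at h
      simpa [hf₀W₁, hf₀W₂] using h
    have hT : c (Sum.inr (Sum.inr true)) = 0 := by
      have h := hc i₀
      rw [Fintype.sum_sum_type, Fintype.sum_sum_type, Fintype.sum_bool] at h
      simp only [hCdef, Sum.elim_inl, Sum.elim_inr] at h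
      rw [sum_coe_zero hi₀A', sum_coe_zero hi₀D] at h
      simpa [hmemW₁i₀, hmemW₂i₀] using h
    have hF : c (Sum.inr (Sum.inr false)) = 0 := by
      rw [hT, zero_add] at hTF; exact hTF
    rintro (x₀ | d₀ | t)
    · have h := hc (↑x₀)
      rw [Fintype.sum_sum_type, Fintype.sum_sum_type, Fintype.sum_bool] at h
      simp only [hCdef, Sum.elim_inl, Sum.elim_inr] at h
      have hx₀D : (↑x₀ : ι) ∉ D := by
        have hxA : (↑x₀ : ι) ∈ A := Finset.mem_of_mem_erase x₀.2
        rw [hD]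
        simp only [Finset.mem_union]
        rintro (h' | h')
        · exact Finset.disjoint_left.mp dD₁A h' hxA
        · exact Finset.disjoint_left.mp dD₂A h' hxA
      rw [sum_coe_pick x₀ (fun x => c (Sum.inl x)), sum_coe_zero hx₀D] at h
      simpa [hT, hF] using h
    · have h := hc (↑d₀)
      rw [Fintype.sum_sum_type, Fintype.sum_sum_type, Fintype.sum_bool] at h
      simp only [hCdef, Sum.elim_inl, Sum.elim_inr] at h
      have hd₀A' : (↑d₀ : ι) ∉ A' := by
        have hdD : (↑d₀ : ι) ∈ D₁ ∪ D₂ := d₀.2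
        intro h'
        have hdA : (↑d₀ : ι) ∈ A := Finset.mem_of_mem_erase h'
        rcases Finset.mem_union.mp hdD with h'' | h''
        · exact Finset.disjoint_left.mp dD₁A h'' hdA
        · exact Finset.disjoint_left.mp dD₂A h'' hdA
      rw [show (∑ x : ↥A', c (Sum.inl x) * (if (↑d₀:ι) ∈ ({(x:ι)}:Finset ι) then 1 else 0)) = 0
        from sum_coe_zero hd₀A' (fun x => c (Sum.inl x))] at h
      rw [sum_coe_pick d₀ (fun x => c (Sum.inr (Sum.inl x)))] at h
      simpa [hT, hF] using h
    · cases t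
      · exact hF
      · exact hT
  have hmem : ∀ j, vec b (C j) ∈ S := by
    rintro (x | d | t)
    · rw [hCdef]; simp only [Sum.elim_inl]; rw [vec_singleton]
      exact hS (Set.mem_range_self _)
    · rw [hCdef]; simp only [Sum.elim_inr, Sum.elim_inl]; rw [vec_singleton]
      exact hS (Set.mem_range_self _)
    · cases t
      · rw [hCdef]; simpa using hw₂
      · rw [hCdef]; simpa using hw₁
  have hmain := nclosed_apply hC hcard (fun j => vec b (C j)) hmem hli
  have hsum : ∑ j, vec b (C j) = vec b A := by
    rw [Fintype.sum_sum_type, Fintype.sum_sum_type, Fintype.sum_bool]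
    have e1 : ∑ x : ↥A', vec b (C (Sum.inl x)) = vec b A' := by
      rw [show (fun x : ↥A' => vec b (C (Sum.inl x))) = fun x : ↥A' => b ↑x from
        funext fun x => by rw [hCdef]; simp only [Sum.elim_inl]; exact vec_singleton b _]
      exact Finset.sum_coe_sort A' (fun i => b i)
    have e2 : ∑ x : ↥D, vec b (C (Sum.inr (Sum.inl x))) = vec b D := by
      rw [show (fun x : ↥D => vec b (C (Sum.inr (Sum.inl x)))) = fun x : ↥D => b ↑x from
        funext fun x => by rw [hCdef]; simp only [Sum.elim_inr, Sum.elim_inl]; exact vec_singleton b _]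
      exact Finset.sum_coe_sort D (fun i => b i)
    rw [e1, e2]
    have eT : C (Sum.inr (Sum.inr true)) = W₁ := by rw [hCdef]; simp
    have eF : C (Sum.inr (Sum.inr false)) = W₂ := by rw [hCdef]; simp
    rw [eT, eF]
    have expand1 : vec b W₁ = vec b {i₀} + vec b D₁ + vec b F := by
      rw [hW₁, vec_union b d2, vec_union b d1]
    have expand2 : vec b W₂ = vec b D₂ + vec b F := by
      rw [hW₂, vec_union b dFD₂.symm]
    have expand3 : vec b D = vec b D₁ + vec b D₂ := by
      rw [hD, vec_union b dD₂D₁.symm]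
    rw [expand1, expand2, expand3]
    have hrear : vec b A' + (vec b D₁ + vec b D₂ +
        (vec b {i₀} + vec b D₁ + vec b F + (vec b D₂ + vec b F))) =
        vec b A' + vec b {i₀} + ((vec b D₁ + vec b D₁) +
          ((vec b D₂ + vec b D₂) + (vec b F + vec b F))) := by abel
    rw [hrear, addself, addself, addself, add_zero, add_zero, add_zero]
    have hunion : A' ∪ {i₀} = A := by
      rw [hA', Finset.union_comm, ← Finset.insert_eq, Finset.insert_erase hi₀]
    have hdisj : Disjoint A' ({i₀} : Finset ι) :=
      Finset.disjoint_singleton_right.mpr (by rw [hA']; exact Finset.notMem_erase i₀ A)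
    rw [← vec_union b hdisj, hunion]
  rwa [hsum] at hmain

lemma main {n : ℕ} {S : Set V} [Infinite ι] (hS : Set.range b ⊆ S) (hC : NClosed n S)
    (hn : 3 ≤ n) (hodd : Odd n) :
    ∀ m, Odd m → ∀ A : Finset ι, A.card = m → vec b A ∈ S := by
  intro m
  induction m using Nat.strong_induction_on with
  | _ m ih =>
    intro hm A hA
    have hm2 := Nat.odd_iff.mp hm
    have hn2 := Nat.odd_iff.mp hodd
    rcases eq_or_ne m 1 with h1 | h1
    · obtain ⟨i, rfl⟩ := Finset.card_eq_one.mp (by omega : A.card = 1)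
      rw [vec_singleton]
      exact hS (Set.mem_range_self _)
    rcases lt_trichotomy m n with hlt | heq | hgt
    · exact gadget b hS hC hodd (hA ▸ hm) (by omega) (by omega)
    · exact mem_of_card_n b hS hC A (by omega)
    · obtain ⟨B, hBA, hB⟩ := Finset.exists_subset_card_eq (s := A) (n := n - 1) (by omega)
      have hsd : (A \ B).card = m - (n - 1) := by
        rw [Finset.card_sdiff_of_subset hBA, hA, hB]
      apply step b hS hC hBA hB (by omega)
      · exact ih (m - (n - 1)) (by omega) (by rw [Nat.odd_iff]; omega) _ hsd
      · exact Finset.card_pos.mp (by omega)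

lemma natCast_zmod2 (k : ℕ) : ((k : ℕ) : ZMod 2) = if k % 2 = 1 then 1 else 0 := by
  rw [← ZMod.natCast_mod]
  have : k % 2 = 0 ∨ k % 2 = 1 := by omega
  rcases this with h | h <;> simp [h]

lemma odd_cast_zmod2 {k : ℕ} : Odd k ↔ ((k : ℕ) : ZMod 2) = 1 := by
  rw [Nat.odd_iff, natCast_zmod2]
  constructor
  · intro h; simp [h]
  · intro h; by_contra hc; simp [hc] at h

noncomputable def phi : V →ₗ[ZMod 2] ZMod 2 := b.constr (ZMod 2) fun _ => 1

lemma phi_eq (v : V) : phi b v = ((b.repr v).support.card : ZMod 2) := by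
  rw [phi, Module.Basis.constr_apply, Finsupp.sum]
  rw [Finset.sum_congr rfl (fun i hi => ?_), Finset.sum_const, nsmul_eq_mul, mul_one]
  rw [smul_eq_mul, mul_one, zmod2_eq_one (Finsupp.mem_support_iff.mp hi)]

lemma odd_iff_phi (v : V) : Odd (b.repr v).support.card ↔ phi b v = 1 := by
  rw [phi_eq, odd_cast_zmod2]

end NCAux

/-- Let `V` be an infinite-dimensional `𝔽₂`-vector space with basis `B` and `n ≥ 3`
odd. The minimal `n`-closed subset of `V` containing `B` is the set of sums of an odd
number of elements of `B`. -/
theorem nClosure_of_basis_odd {V : Type*} [AddCommGroup V] [Module (ZMod 2) V]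
    {ι : Type*} [Infinite ι] (b : Module.Basis ι (ZMod 2) V) (n : ℕ) (hn : 3 ≤ n)
    (hodd : Odd n) :
    ⋂₀ {S : Set V | Set.range b ⊆ S ∧ NClosed n S} =
      {v : V | Odd (b.repr v).support.card} := by
  classical
  apply subset_antisymm
  · apply Set.sInter_subset_of_mem
    constructor
    · rintro v ⟨i, rfl⟩
      simp only [Set.mem_setOf_eq, Module.Basis.repr_self]
      rw [Finsupp.support_single_ne_zero i one_ne_zero, Finset.card_singleton]
      exact odd_one
    · intro f hmem _
      rw [Set.mem_setOf_eq, NCAux.odd_iff_phi, map_sum]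
      rw [Finset.sum_congr rfl (fun i _ => (NCAux.odd_iff_phi b (f i)).mp (hmem i))]
      rw [Finset.sum_const, Finset.card_univ, Fintype.card_fin, nsmul_eq_mul, mul_one]
      exact NCAux.odd_cast_zmod2.mp hodd
  · intro v hv
    rw [Set.mem_sInter]
    rintro S ⟨hSb, hSC⟩
    have := NCAux.main b hSb hSC hn hodd _ hv _ rfl
    rwa [NCAux.vec_support] at this
end

section
/- In PGL_{n+1}(𝔽_q) acting on n-dimensional projective space over 𝔽_q, the diagonal element g_λ = diag(λ,1,…,1), where λ has multiplicative order s, acts as a permutation whose parity equals the parity of (q^n − 1)(s − 1)/s. -/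
open Projectivization

section Aux
variable {F : Type*} [Field F] {k : ℕ}

/-- The effect on vectors of `m` iterations of `diag(l,1,…,1)`. -/
def dvec (l : Fˣ) (m : ℕ) (v : Fin (k + 1) → F) : Fin (k + 1) → F :=
  fun i => if i = 0 then (l : F) ^ m * v i else v i

lemma dvec_ne_zero (l : Fˣ) (m : ℕ) {v : Fin (k + 1) → F} (hv : v ≠ 0) :
    dvec l m v ≠ 0 := by
  intro h
  apply hv
  funext i
  have := congrFun h i
  by_cases hi : i = 0 <;> simp [dvec, hi] at this <;> simp [this, hi]

lemma dvec_fixed_iff (l : Fˣ) (m : ℕ) {v : Fin (k + 1) → F} (hv : v ≠ 0)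
    (hv0 : v 0 ≠ 0) {i : Fin (k + 1)} (hi : i ≠ 0) (hvi : v i ≠ 0) :
    mk F (dvec l m v) (dvec_ne_zero l m hv) = mk F v hv ↔ (l : F) ^ m = 1 := by
  rw [mk_eq_mk_iff' F _ _ _ hv]
  constructor
  · rintro ⟨a, ha⟩
    have hai : a * v i = v i := by
      have h' := congrFun ha i
      rw [Pi.smul_apply, smul_eq_mul] at h'
      rwa [dvec, if_neg hi] at h'
    have ha0 : a * v 0 = (l : F) ^ m * v 0 := by
      have h' := congrFun ha 0
      rw [Pi.smul_apply, smul_eq_mul] at h'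
      rwa [dvec, if_pos rfl] at h'
    have ha1 : a = 1 := mul_right_cancel₀ hvi (by rw [hai, one_mul])
    rw [ha1, one_mul] at ha0
    exact (mul_right_cancel₀ hv0 (by rw [one_mul]; exact ha0)).symm
  · intro h
    refine ⟨1, funext fun j => ?_⟩
    by_cases hj : j = 0 <;> simp [dvec, hj, h]

lemma dvec_one_fixed_iff (l : Fˣ) (hl1 : (l : F) ≠ 1) {v : Fin (k + 1) → F} (hv : v ≠ 0) :
    mk F (dvec l 1 v) (dvec_ne_zero l 1 hv) = mk F v hv ↔
      (v 0 = 0 ∨ ∀ i, i ≠ 0 → v i = 0) := by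
  constructor
  · intro h
    by_contra hc
    push_neg at hc
    obtain ⟨hv0, i, hi, hvi⟩ := hc
    have := (dvec_fixed_iff l 1 hv hv0 hi hvi).1 h
    rw [pow_one] at this
    exact hl1 this
  · rintro (h0 | hall)
    · rw [mk_eq_mk_iff' F _ _ _ hv]
      refine ⟨1, funext fun j => ?_⟩
      by_cases hj : j = 0 <;> simp [dvec, hj, h0]
    · rw [mk_eq_mk_iff' F _ _ _ hv]
      refine ⟨(l : F), funext fun j => ?_⟩
      by_cases hj : j = 0
      · simp [dvec, hj]
      · simp [dvec, hj, hall j hj]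
end Aux

/-- In `PGL_{n+1}(𝔽_q)` acting on `ℙ^n(𝔽_q)`, the diagonal element
`g_λ = diag(λ,1,…,1)`, where `λ` has multiplicative order `s`, acts as a permutation
whose sign is `(−1)^{((q^n − 1)/s)·(s − 1)}`. -/
theorem sign_of_diagonal_projective_transformation
    (F : Type*) [Field F] [Fintype F] (n : ℕ) (hn : 1 ≤ n) (l : Fˣ)
    [Fintype (Projectivization F (Fin (n + 1) → F))]
    [DecidableEq (Projectivization F (Fin (n + 1) → F))]
    (σ : (Fin (n + 1) → F) ≃ₗ[F] (Fin (n + 1) → F))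
    (hσ : σ = LinearEquiv.piCongrRight
      (fun i => if i = 0 then LinearEquiv.smulOfUnit (M := F) l else LinearEquiv.refl F F))
    (τ : Equiv.Perm (Projectivization F (Fin (n + 1) → F)))
    (hτ : ∀ x, τ x = Projectivization.map σ.toLinearMap σ.injective x) :
    Equiv.Perm.sign τ =
      (-1 : ℤˣ) ^ ((Fintype.card F ^ n - 1) / orderOf l * (orderOf l - 1)) := by
  classical
  set s := orderOf l with hs
  have hs0 : 0 < s := orderOf_pos l
  -- basic action on mk
  have hσv : ∀ v : Fin (n + 1) → F, σ v = dvec l 1 v := by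
    intro v
    subst hσ
    funext i
    rw [LinearEquiv.piCongrRight_apply]
    by_cases hi : i = 0 <;>
      simp [dvec, hi, LinearEquiv.smulOfUnit, DistribMulAction.toLinearEquiv, Units.smul_def]
  have hτd : ∀ (v : Fin (n + 1) → F) (hv : v ≠ 0),
      τ (mk F v hv) = mk F (dvec l 1 v) (dvec_ne_zero l 1 hv) := by
    intro v hv
    rw [hτ, map_mk]
    refine (mk_eq_mk_iff F _ _ _ _).2 ⟨1, ?_⟩
    rw [one_smul]
    exact (hσv v).symm
  have htpow : ∀ (m : ℕ) (v : Fin (n + 1) → F) (hv : v ≠ 0),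
      (τ ^ m) (mk F v hv) = mk F (dvec l m v) (dvec_ne_zero l m hv) := by
    intro m
    induction m with
    | zero =>
      intro v hv
      rw [pow_zero]
      exact (mk_eq_mk_iff F _ _ _ _).2 ⟨1, by
        funext i; by_cases hi : i = 0 <;> simp [dvec, hi]⟩
    | succ m ih =>
      intro v hv
      rw [pow_succ, Equiv.Perm.mul_apply, hτd v hv, ih _ (dvec_ne_zero l 1 hv)]
      refine (mk_eq_mk_iff F _ _ _ _).2 ⟨1, ?_⟩
      funext i
      by_cases hi : i = 0 <;> simp [dvec, hi, pow_succ] <;> ring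
  have hls : (l : F) ^ s = 1 := by
    have h := pow_orderOf_eq_one l
    calc (l : F) ^ s = ((l ^ s : Fˣ) : F) := by rw [Units.val_pow_eq_pow_val]
    _ = 1 := by rw [hs, h, Units.val_one]
  have hτs : τ ^ s = 1 := by
    ext P
    induction P using Projectivization.ind with
    | h v hv =>
      rw [htpow s v hv, Equiv.Perm.one_apply]
      congr 1
      funext i
      by_cases hi : i = 0 <;> simp [dvec, hi, hls]
  -- the case l = 1
  by_cases hs1 : s = 1
  · have hl1 : l = 1 := orderOf_eq_one_iff.1 hs1
    have hτ1 : τ = 1 := by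
      have : τ = τ ^ s := by rw [hs1, pow_one]
      rw [this, hτs]
    rw [hτ1, hs1]
    simp
  -- now l ≠ 1
  have hl1 : (l : F) ≠ 1 := by
    intro h
    exact hs1 (orderOf_eq_one_iff.2 (Units.ext h))
  have hsupp : ∀ (v : Fin (n + 1) → F) (hv : v ≠ 0),
      (mk F v hv ∈ τ.support ↔ (v 0 ≠ 0 ∧ ∃ i, i ≠ 0 ∧ v i ≠ 0)) := by
    intro v hv
    rw [Equiv.Perm.mem_support, hτd v hv, Ne, dvec_one_fixed_iff l hl1 hv]
    push_neg
    rfl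
  -- every point of the support lies on an orbit of size s
  have horb : ∀ x ∈ τ.support, (τ.cycleOf x).support.card = s := by
    intro x
    induction x using Projectivization.ind with
    | h v hv =>
      intro hx
      obtain ⟨hv0, i, hi, hvi⟩ := (hsupp v hv).1 hx
      have key : ∀ (j m : ℕ), (τ ^ m) ((τ ^ j) (mk F v hv)) = (τ ^ j) (mk F v hv) ↔ s ∣ m := by
        intro j m
        have hdj0 : dvec l j v 0 ≠ 0 := by
          simp only [dvec, if_pos rfl]
          exact mul_ne_zero (pow_ne_zero _ (Units.ne_zero l)) hv0
        have hdji : dvec l j v i ≠ 0 := by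
          simp only [dvec, if_neg hi]
          exact hvi
        rw [htpow j v hv, htpow m _ (dvec_ne_zero l j hv),
          dvec_fixed_iff l m (dvec_ne_zero l j hv) hdj0 hi hdji]
        constructor
        · intro h
          exact orderOf_dvd_of_pow_eq_one (Units.ext (by rw [Units.val_pow_eq_pow_val, h, Units.val_one]))
        · intro h
          obtain ⟨c, rfl⟩ := h
          rw [pow_mul, hls, one_pow]
      have hset : (τ.cycleOf (mk F v hv)).support =
          (Finset.range s).image (fun k => (τ ^ k) (mk F v hv)) := by
        ext y
        simp only [Finset.mem_image, Finset.mem_range, Equiv.Perm.mem_support_cycleOf_iff]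
        constructor
        · rintro ⟨hsc, -⟩
          obtain ⟨i', hi', rfl⟩ := hsc.exists_pow_eq'
          have hord : orderOf τ ≤ s :=
            Nat.le_of_dvd hs0 (orderOf_dvd_of_pow_eq_one hτs)
          exact ⟨i', lt_of_lt_of_le hi' hord, rfl⟩
        · rintro ⟨k, hk, rfl⟩
          exact ⟨((Equiv.Perm.sameCycle_pow_left).2 (Equiv.Perm.SameCycle.refl τ _)).symm, hx⟩
      rw [hset, Finset.card_image_of_injOn, Finset.card_range]
      have hmono : ∀ j k, j < s → k < s → j ≤ k →
          (τ ^ j) (mk F v hv) = (τ ^ k) (mk F v hv) → j = k := by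
        intro j k hjs hks hjk h
        have hk' : k = (k - j) + j := by omega
        have : (τ ^ (k - j)) ((τ ^ j) (mk F v hv)) = (τ ^ j) (mk F v hv) := by
          conv_rhs => rw [h, hk', pow_add, Equiv.Perm.mul_apply]
        have hdvd := (key j (k - j)).1 this
        have : k - j = 0 := by
          by_contra hne
          exact absurd (Nat.le_of_dvd (Nat.pos_of_ne_zero hne) hdvd) (by omega)
        omega
      intro j hj k hk h
      simp only [Finset.coe_range, Set.mem_Iio] at hj hk
      rcases le_total j k with hle | hle
      · exact hmono j k hj hk hle h
      · exact (hmono k j hk hj hle h.symm).symm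
  -- cardinality of the support
  have hcard : τ.support.card = Fintype.card F ^ n - 1 := by
    have hcons : ∀ w : Fin n → F, (Fin.cons 1 w : Fin (n + 1) → F) ≠ 0 := by
      intro w h
      have := congrFun h 0
      rw [Fin.cons_zero] at this
      exact one_ne_zero this
    set φ : {w : Fin n → F // w ≠ 0} → {x // x ∈ τ.support} := fun w =>
      ⟨mk F (Fin.cons 1 ↑w) (hcons w), by
        rw [hsupp]
        refine ⟨by rw [Fin.cons_zero]; exact one_ne_zero, ?_⟩
        obtain ⟨j, hj⟩ := Function.ne_iff.1 w.2
        exact ⟨j.succ, Fin.succ_ne_zero j, by rwa [Fin.cons_succ]⟩⟩ with hφ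
    have hbij : Function.Bijective φ := by
      constructor
      · rintro ⟨w, hw⟩ ⟨w', hw'⟩ h
        simp only [hφ, Subtype.mk.injEq] at h
        rw [mk_eq_mk_iff' F _ _ (hcons w) (hcons w')] at h
        obtain ⟨a, ha⟩ := h
        have ha0 : a = 1 := by
          have := congrFun ha 0
          rwa [Pi.smul_apply, smul_eq_mul, Fin.cons_zero, Fin.cons_zero, mul_one] at this
        refine Subtype.ext (funext fun j => ?_)
        have := congrFun ha j.succ
        rw [Pi.smul_apply, smul_eq_mul, Fin.cons_succ, Fin.cons_succ, ha0, one_mul] at this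
        exact this.symm
      · rintro ⟨x, hx⟩
        revert hx
        induction x using Projectivization.ind with
        | h v hv =>
          intro hx
          obtain ⟨hv0, i, hi, hvi⟩ := (hsupp v hv).1 hx
          set w : Fin n → F := fun j => (v 0)⁻¹ * v j.succ with hw
          have hwne : w ≠ 0 := by
            obtain ⟨j, hj⟩ := Fin.exists_succ_eq_of_ne_zero hi
            refine Function.ne_iff.2 ⟨j, ?_⟩
            rw [hw]
            simp only [Pi.zero_apply]
            rw [hj]
            exact mul_ne_zero (inv_ne_zero hv0) hvi
          refine ⟨⟨w, hwne⟩, Subtype.ext ?_⟩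
          simp only [hφ]
          rw [mk_eq_mk_iff' F _ _ (hcons w) hv]
          refine ⟨(v 0)⁻¹, funext fun j => ?_⟩
          refine Fin.cases ?_ (fun j' => ?_) j
          · rw [Pi.smul_apply, smul_eq_mul, Fin.cons_zero, inv_mul_cancel₀ hv0]
          · rw [Pi.smul_apply, smul_eq_mul, Fin.cons_succ]
    have hc1 : Fintype.card {x // x ∈ τ.support} = Fintype.card {w : Fin n → F // w ≠ 0} :=
      (Fintype.card_congr (Equiv.ofBijective φ hbij)).symm
    have hc2 : Fintype.card {w : Fin n → F // w ≠ 0} = Fintype.card F ^ n - 1 := by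
      have := Fintype.card_subtype_compl (fun w : Fin n → F => w = 0)
      simp only [Fintype.card_subtype_eq, Fintype.card_fun, Fintype.card_fin] at this
      exact this
    rw [← Fintype.card_coe, hc1, hc2]
  -- cycle type is constant equal to s
  have hct : ∀ a ∈ τ.cycleType, a = s := by
    intro a ha
    rw [Equiv.Perm.cycleType_def, Multiset.mem_map] at ha
    obtain ⟨c, hc, rfl⟩ := ha
    rw [← Finset.mem_def] at hc
    have hmem := Equiv.Perm.mem_cycleFactorsFinset_iff.1 hc
    obtain ⟨x, hxc⟩ := hmem.1.nonempty_support
    have hx : x ∈ τ.support := by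
      rw [Equiv.Perm.mem_support, ← hmem.2 x hxc]
      exact Equiv.Perm.mem_support.1 hxc
    have hcx : c = τ.cycleOf x := Equiv.Perm.cycle_is_cycleOf hxc hc
    simp only [Function.comp_apply]
    rw [hcx]
    exact horb x hx
  -- finish
  set m := Multiset.card τ.cycleType with hm
  have hrep : τ.cycleType = Multiset.replicate m s := Multiset.eq_replicate_card.2 hct
  have hsum : m * s = Fintype.card F ^ n - 1 := by
    rw [← hcard, ← Equiv.Perm.sum_cycleType, hrep, Multiset.sum_replicate, smul_eq_mul]
  have hdiv : (Fintype.card F ^ n - 1) / s = m := by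
    rw [← hsum, Nat.mul_div_cancel _ hs0]
  rw [Equiv.Perm.sign_of_cycleType, hrep, Multiset.sum_replicate, Multiset.card_replicate,
    hdiv, smul_eq_mul]
  have hexp : m * s + m = m * (s - 1) + 2 * m := by
    obtain ⟨t, ht⟩ : ∃ t, s = t + 1 := ⟨s - 1, by omega⟩
    rw [ht, Nat.add_sub_cancel]
    ring
  rw [hexp, pow_add, pow_mul]
  norm_num
end

section
/- Let G be a subgroup of Sym₇ that contains a subgroup of order 168 and acts transitively on the 35 three-element subsets of a 7-element set. Then |G| is divisible by 840, so [Sym₇ : G] divides 6, and hence G is A₇ or Sym₇. -/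
open Equiv Equiv.Perm Subgroup Pointwise

-- step 2: an element with a fixed point and a moved point yields a 3-cycle in N
private lemma step2 {N : Subgroup (Perm (Fin 7))} (hN : N.Normal) {g : Perm (Fin 7)}
    (hg : g ∈ N) {a c : Fin 7} (ha : g a ≠ a) (hc : g c = c) :
    ∃ f ∈ N, f.IsThreeCycle := by
  set b := g a with hb
  have hba : b ≠ a := ha
  have hgb : g b ≠ b := fun h => ha (g.injective (h.trans hb))
  have hcb : c ≠ b := fun h => hgb (by rw [← h, hc, h])
  have hcgb : c ≠ g b := fun h => hgb (g.injective (by rw [← h]; exact hc))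
  refine ⟨swap b c * swap (g b) (g c), ?_, ?_⟩
  · rw [swap_apply_apply g b c]
    have hmem := N.mul_mem (hN.conj_mem g hg (swap b c)) (N.inv_mem hg)
    simpa only [mul_assoc, Equiv.swap_inv] using hmem
  · rw [hc, swap_comm b c, swap_comm (g b) c]
    exact isThreeCycle_swap_mul_swap_same hcb hcgb (fun h => hgb h.symm)

private lemma exists_notMem (s : Finset (Fin 7)) (hs : s.card ≤ 4) :
    ∃ c : Fin 7, c ∉ s := by
  by_contra h
  push_neg at h
  have h7 : (Finset.univ : Finset (Fin 7)).card ≤ s.card :=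
    Finset.card_le_card (fun x _ => h x)
  simp [Finset.card_univ] at h7
  omega

private lemma normal_ge_alternating {N : Subgroup (Perm (Fin 7))} (hN : N.Normal)
    (hnb : N ≠ ⊥) : alternatingGroup (Fin 7) ≤ N := by
  obtain ⟨⟨g, hg⟩, hg1⟩ := Subgroup.ne_bot_iff_exists_ne_one.1 hnb
  have hg1' : g ≠ 1 := by simpa [Subtype.ext_iff] using hg1
  obtain ⟨a, ha⟩ : ∃ a, g a ≠ a := by
    by_contra h; push_neg at h; exact hg1' (Equiv.ext h)
  -- choose c ∉ {a, g a, g (g a)}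
  obtain ⟨c, hc⟩ : ∃ c : Fin 7, c ∉ ({a, g a, g (g a)} : Finset (Fin 7)) := by
    refine exists_notMem _ ?_
    refine le_trans (Finset.card_insert_le _ _) ?_
    have := Finset.card_insert_le (g a) ({g (g a)} : Finset (Fin 7))
    simp at this ⊢
    omega
  simp only [Finset.mem_insert, Finset.mem_singleton, not_or] at hc
  obtain ⟨hca, hcga, hcgga⟩ := hc
  set b := g a with hb
  have hba : b ≠ a := ha
  have hgbb : g b ≠ b := fun h => ha (g.injective (h.trans hb))
  have hgcb : g c ≠ b := fun h => hca (g.injective (h.trans hb))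
  -- the commutator σ = swap b c * swap (g b) (g c) lies in N
  set σ : Perm (Fin 7) := swap b c * swap (g b) (g c) with hσ
  have hσN : σ ∈ N := by
    rw [hσ, swap_apply_apply g b c]
    have hmem := N.mul_mem (hN.conj_mem g hg (swap b c)) (N.inv_mem hg)
    simpa only [mul_assoc, Equiv.swap_inv] using hmem
  -- σ moves b
  have hσb : σ b = c := by
    rw [hσ]
    simp only [Perm.mul_apply]
    rw [swap_apply_of_ne_of_ne (fun h => hgbb h.symm) (fun h => hgcb h.symm),
      swap_apply_left]
  have hσbb : σ b ≠ b := by rw [hσb]; exact fun h => hcga h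
  -- σ has a fixed point
  obtain ⟨x, hx⟩ : ∃ x : Fin 7, x ∉ ({b, c, g b, g c} : Finset (Fin 7)) := by
    refine exists_notMem _ ?_
    refine le_trans (Finset.card_insert_le _ _) ?_
    refine le_trans (Nat.add_le_add_right (Finset.card_insert_le _ _) 1) ?_
    have := Finset.card_insert_le (g b) ({g c} : Finset (Fin 7))
    simp at this ⊢
    omega
  simp only [Finset.mem_insert, Finset.mem_singleton, not_or] at hx
  obtain ⟨hxb, hxc, hxgb, hxgc⟩ := hx
  have hσx : σ x = x := by
    rw [hσ]
    simp only [Perm.mul_apply]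
    rw [swap_apply_of_ne_of_ne hxgb hxgc, swap_apply_of_ne_of_ne hxb hxc]
  -- step2 gives a 3-cycle in N
  obtain ⟨f, hfN, hf3⟩ := step2 hN hσN hσbb hσx
  -- N contains all 3-cycles, hence the alternating group
  rw [← closure_three_cycles_eq_alternating]
  refine (Subgroup.closure_le N).2 ?_
  intro h hh
  obtain ⟨π, hπ⟩ := isConj_iff.1 (isConj_iff_cycleType_eq.2 (hf3.cycleType.trans hh.cycleType.symm))
  exact hπ ▸ hN.conj_mem f hfN π

/-- If a subgroup `G ≤ Sym₇` contains a subgroup of order 168 and acts transitively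
on the 35 three-element subsets of a 7-element set, then `840 ∣ |G|`, so
`[Sym₇ : G] ∣ 6`, and hence `G = A₇` or `G = Sym₇`. -/
theorem subgroup_of_sym7_is_alternating_or_full
    (G : Subgroup (Equiv.Perm (Fin 7)))
    (hsub : ∃ K : Subgroup (Equiv.Perm (Fin 7)), K ≤ G ∧ Nat.card K = 168)
    (htrans : ∀ s t : Finset (Fin 7), s.card = 3 → t.card = 3 →
      ∃ g ∈ G, s.image g = t) :
    840 ∣ Nat.card G ∧ G.index ∣ 6 ∧
      (G = alternatingGroup (Fin 7) ∨ G = ⊤) := by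
  classical
  obtain ⟨K, hKG, hK⟩ := hsub
  have hcardS : Nat.card (Perm (Fin 7)) = 5040 := by
    rw [Nat.card_eq_fintype_card, Fintype.card_perm, Fintype.card_fin]
    decide
  have h168 : 168 ∣ Nat.card G := hK ▸ Subgroup.card_dvd_of_le hKG
  -- 35 ∣ card G via orbit-stabilizer
  have h35 : 35 ∣ Nat.card G := by
    set s₀ : Finset (Fin 7) := {0, 1, 2} with hs₀def
    have hs₀ : s₀.card = 3 := by decide
    have horb : MulAction.orbit G s₀ = {t : Finset (Fin 7) | t.card = 3} := by
      ext t
      constructor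
      · rintro ⟨⟨g, hgG⟩, rfl⟩
        show ((⟨g, hgG⟩ : G) • s₀).card = 3
        have : (⟨g, hgG⟩ : G) • s₀ = s₀.image g := by
          show g • s₀ = s₀.image g
          rw [Finset.smul_finset_def]
          rfl
        rw [this, Finset.card_image_of_injective _ g.injective]; exact hs₀
      · intro ht
        obtain ⟨g, hgG, himg⟩ := htrans s₀ t hs₀ ht
        refine ⟨⟨g, hgG⟩, ?_⟩
        show g • s₀ = t
        rw [Finset.smul_finset_def, ← himg]
        rfl
    have hidx := MulAction.index_stabilizer G s₀
    rw [horb] at hidx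
    have hcard35 : ({t : Finset (Fin 7) | t.card = 3} : Set (Finset (Fin 7))).ncard = 35 := by
      rw [← Nat.card_coe_set_eq, Nat.card_eq_fintype_card]
      decide
    rw [hcard35] at hidx
    exact hidx ▸ Subgroup.index_dvd_card (MulAction.stabilizer G s₀)
  have h840 : 840 ∣ Nat.card G :=
    (by norm_num : Nat.lcm 168 35 = 840) ▸ Nat.lcm_dvd h168 h35
  have hmul := G.card_mul_index
  rw [hcardS] at hmul
  obtain ⟨k, hk⟩ := id h840
  have h6 : k * G.index = 6 := by
    have h : 840 * (k * G.index) = 840 * 6 := by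
      rw [← mul_assoc, ← hk, hmul]
    exact Nat.eq_of_mul_eq_mul_left (by norm_num) h
  have hidx6 : G.index ∣ 6 := ⟨k, by rw [← h6, mul_comm]⟩
  refine ⟨h840, hidx6, ?_⟩
  -- the normal core of G is nontrivial, hence contains the alternating group
  have hAleG : alternatingGroup (Fin 7) ≤ G := by
    have hNn : G.normalCore.Normal := Subgroup.normalCore_normal G
    have h1 : G.normalCore.index ∣ Nat.factorial G.index := by
      rw [Subgroup.normalCore_eq_ker, Subgroup.index_ker]
      have h2 := Subgroup.card_subgroup_dvd_card (MulAction.toPermHom (Perm (Fin 7))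
        (Perm (Fin 7) ⧸ G)).range
      have h3 : Nat.card (Perm (Perm (Fin 7) ⧸ G)) = Nat.factorial G.index := by
        letI : Fintype (Perm (Fin 7) ⧸ G) := Fintype.ofFinite _
        rw [Nat.card_eq_fintype_card, Fintype.card_perm, ← Nat.card_eq_fintype_card]
        rfl
      rwa [h3] at h2
    have hle6 : G.index ≤ 6 := Nat.le_of_dvd (by norm_num) hidx6
    have h720 : G.normalCore.index ∣ 720 :=
      h1.trans (by simpa [show Nat.factorial 6 = 720 from rfl] using Nat.factorial_dvd_factorial hle6)
    have hNbot : G.normalCore ≠ ⊥ := by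
      intro h
      rw [h, Subgroup.index_bot, hcardS] at h720
      norm_num at h720
    exact le_trans (normal_ge_alternating hNn hNbot) (Subgroup.normalCore_le G)
  -- alternating group has index 2
  have hA2 : (alternatingGroup (Fin 7)).index = 2 := by
    have h2A : 2 * Nat.card (alternatingGroup (Fin 7)) = 5040 := by
      rw [Nat.card_eq_fintype_card, two_mul_card_alternatingGroup, ← Nat.card_eq_fintype_card,
        hcardS]
    have := (alternatingGroup (Fin 7)).card_mul_index
    rw [hcardS] at this
    have hcA : Nat.card (alternatingGroup (Fin 7)) = 2520 := by omega
    rw [hcA] at this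
    omega
  have hdvd2 : G.index ∣ 2 := hA2 ▸ Subgroup.index_dvd_of_le hAleG
  rcases (Nat.dvd_prime Nat.prime_two).1 hdvd2 with h | h
  · exact Or.inr (Subgroup.index_eq_one.1 h)
  · refine Or.inl ?_
    rw [h] at hmul
    refine (Subgroup.eq_of_le_of_card_ge hAleG ?_).symm
    have h2A : 2 * Nat.card (alternatingGroup (Fin 7)) = 5040 := by
      rw [Nat.card_eq_fintype_card, two_mul_card_alternatingGroup, ← Nat.card_eq_fintype_card,
        hcardS]
    omega
end
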